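/- arXiv:1112.6284 — 2 statements merged into one kernel-verified Lean document; each statement's English description precedes it below -/
import Mathlib

section
/- Let (G,S) be the Cayley graph of a torsion-free finitely generated abelian group G ≅ ℤ^m with finite symmetric generating set S. Then every polynomial growth harmonic function on (G,S) is (the restriction to ℤ^m of) a polynomial: for every d ≥ 0, H^d(G,S) ⊆ P^d(ℤ^m). -/
open MvPolynomial

/-- The discrete Laplacian on the Cayley graph of an abelian group `G` with a finite
(symmetric, listed with possible repetitions, hence a multiset) generating set `S`:
`L^S f x = ∑_{s ∈ S} (f (x + s) - f x)`, counted with multiplicity. -/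
def lap {G : Type} [AddCommGroup G] (S : Multiset G) (f : G → ℝ) : G → ℝ := fun x =>
  (S.map fun s => f (x + s) - f x).sum

/-- The squared gradient `|∇f|²(x) = ∑_{s ∈ S} (f (x + s) - f x)²`, with multiplicity. -/
def gradSq {G : Type} [AddCommGroup G] (S : Multiset G) (f : G → ℝ) (x : G) : ℝ :=
  (S.map fun s => (f (x + s) - f x) ^ 2).sum

/-- The word metric `d^S(x,y)`: the least `k` such that `y - x` is a sum of `k`
elements of `S` (i.e. the combinatorial distance in the Cayley graph). -/
noncomputable def wdist {G : Type} [AddCommGroup G] (S : Multiset G) (x y : G) : ℕ :=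
  sInf {k : ℕ | ∃ w : Fin k → G, (∀ i, w i ∈ S) ∧ x + ∑ i, w i = y}

/-- The closed ball `B_R(x) = {y : d^S(x,y) ≤ R}` in the word metric. -/
def ball {G : Type} [AddCommGroup G] (S : Multiset G) (x : G) (R : ℝ) : Set G :=
  {y | (wdist S x y : ℝ) ≤ R}

/-- The finitely generated abelian group `ℤ^m ⊕ ⊕_{i=1}^l ℤ_{q i}`. -/
abbrev AbG (m l : ℕ) (q : Fin l → ℕ) : Type := (Fin m → ℤ) × (∀ i : Fin l, ZMod (q i))

/-- `H^d(G,S)`: the harmonic functions on `(G,S)` of polynomial growth of order at most `d`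
(with respect to a fixed basepoint `p`). -/
noncomputable def HdSet {G : Type} [AddCommGroup G] (S : Multiset G) (p : G) (d : Real) :
    Set (G -> Real) :=
  {u | (forall x, lap S u x = 0) /\
       exists C : Real, forall x, |u x| <= C * ((wdist S p x : Real) + 1) ^ d}

namespace TFH

abbrev G (m : ℕ) := Fin m → ℤ

variable {m : ℕ}

/-- one-step difference operator -/
def Dop (g : G m) (f : G m → ℝ) : G m → ℝ := fun x => f (x + g) - f x

def DL : List (G m) → (G m → ℝ) → (G m → ℝ)
  | [], f => f
  | g :: l, f => Dop g (DL l f)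

section basics

variable {S : Multiset (G m)} {p : G m}

lemma neg_mem (hsym : S.map (fun s => -s) = S) {s : G m} (hs : s ∈ S) : -s ∈ S := by
  have : -s ∈ S.map (fun s => -s) := Multiset.mem_map_of_mem _ hs
  rwa [hsym] at this

lemma exists_word (hsym : S.map (fun s => -s) = S)
    (hgen : AddSubgroup.closure {s : G m | s ∈ S} = ⊤) (g : G m) :
    ∃ k : ℕ, ∃ w : Fin k → G m, (∀ i, w i ∈ S) ∧ ∑ i, w i = g := by
  have hg : g ∈ AddSubgroup.closure {s : G m | s ∈ S} := by rw [hgen]; trivial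
  induction hg using AddSubgroup.closure_induction with
  | mem s hs => exact ⟨1, fun _ => s, fun _ => hs, by simp⟩
  | zero => exact ⟨0, fun i => i.elim0, fun i => i.elim0, by simp⟩
  | add a b _ _ iha ihb =>
      obtain ⟨k1, w1, hw1, hs1⟩ := iha
      obtain ⟨k2, w2, hw2, hs2⟩ := ihb
      refine ⟨k1 + k2, Fin.append w1 w2, ?_, ?_⟩
      · intro i
        refine Fin.addCases (fun j => ?_) (fun j => ?_) i
        · rw [Fin.append_left]; exact hw1 j
        · rw [Fin.append_right]; exact hw2 j
      · rw [Fin.sum_univ_add]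
        simp only [Fin.append_left, Fin.append_right, hs1, hs2]
  | neg a _ iha =>
      obtain ⟨k, w, hw, hs⟩ := iha
      exact ⟨k, fun i => -(w i), fun i => neg_mem hsym (hw i),
        by rw [Finset.sum_neg_distrib, hs]⟩

lemma wdist_le {x y : G m} {n : ℕ}
    (h : ∃ w : Fin n → G m, (∀ i, w i ∈ S) ∧ x + ∑ i, w i = y) : wdist S x y ≤ n :=
  Nat.sInf_le h

lemma wdist_spec (hsym : S.map (fun s => -s) = S)
    (hgen : AddSubgroup.closure {s : G m | s ∈ S} = ⊤) (x y : G m) :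
    ∃ w : Fin (wdist S x y) → G m, (∀ i, w i ∈ S) ∧ x + ∑ i, w i = y := by
  have hne : {k : ℕ | ∃ w : Fin k → G m, (∀ i, w i ∈ S) ∧ x + ∑ i, w i = y}.Nonempty := by
    obtain ⟨k, w, hw, hs⟩ := exists_word hsym hgen (y - x)
    exact ⟨k, w, hw, by rw [hs]; abel⟩
  exact Nat.sInf_mem hne

lemma wdist_add_le (hsym : S.map (fun s => -s) = S)
    (hgen : AddSubgroup.closure {s : G m | s ∈ S} = ⊤) (p z : G m) {n : ℕ}
    (w : Fin n → G m) (hw : ∀ i, w i ∈ S) :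
    wdist S p (z + ∑ i, w i) ≤ wdist S p z + n := by
  obtain ⟨w0, hw0, hs0⟩ := wdist_spec hsym hgen p z
  apply wdist_le
  refine ⟨Fin.append w0 w, ?_, ?_⟩
  · intro i
    refine Fin.addCases (fun j => ?_) (fun j => ?_) i
    · rw [Fin.append_left]; exact hw0 j
    · rw [Fin.append_right]; exact hw j
  · rw [Fin.sum_univ_add]
    simp only [Fin.append_left, Fin.append_right]
    rw [← add_assoc, hs0]

lemma wdist_step (hsym : S.map (fun s => -s) = S)
    (hgen : AddSubgroup.closure {s : G m | s ∈ S} = ⊤) {s : G m} (hs : s ∈ S) (x : G m) :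
    wdist S p (x + s) ≤ wdist S p x + 1 := by
  have := wdist_add_le hsym hgen p x (fun _ : Fin 1 => s) (fun _ => hs)
  simpa using this

lemma wdist_step_sub (hsym : S.map (fun s => -s) = S)
    (hgen : AddSubgroup.closure {s : G m | s ∈ S} = ⊤) {s : G m} (hs : s ∈ S) (x : G m) :
    wdist S p (x - s) ≤ wdist S p x + 1 := by
  have := wdist_step (p := p) hsym hgen (neg_mem hsym hs) x
  simpa [sub_eq_add_neg] using this

/-- coordinate bound constant -/
def K (S : Multiset (G m)) : ℤ := (S.map fun s => ∑ i, |s i|).sum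

lemma K_nonneg (S : Multiset (G m)) : 0 ≤ K S := by
  apply Multiset.sum_nonneg
  intro a ha
  obtain ⟨s, _, rfl⟩ := Multiset.mem_map.mp ha
  positivity

lemma K_spec {s : G m} (hs : s ∈ S) (i : Fin m) : |s i| ≤ K S := by
  have h1 : |s i| ≤ ∑ j, |s j| :=
    Finset.single_le_sum (f := fun j => |s j|) (fun j _ => abs_nonneg _) (Finset.mem_univ i)
  refine h1.trans ?_
  apply Multiset.single_le_sum
  · intro a ha
    obtain ⟨t, _, rfl⟩ := Multiset.mem_map.mp ha
    positivity
  · exact Multiset.mem_map_of_mem _ hs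

lemma coord_bound (hsym : S.map (fun s => -s) = S)
    (hgen : AddSubgroup.closure {s : G m | s ∈ S} = ⊤) {x : G m} {R : ℕ}
    (h : wdist S p x ≤ R) (i : Fin m) : |x i - p i| ≤ K S * R := by
  obtain ⟨w, hw, hs⟩ := wdist_spec hsym hgen p x
  have hxi : x i - p i = ∑ j, w j i := by
    have hx : x i = p i + ∑ j, w j i := by
      conv_lhs => rw [← hs]
      simp [Finset.sum_apply]
    rw [hx]; ring
  rw [hxi]
  calc |∑ j, w j i| ≤ ∑ j, |w j i| := Finset.abs_sum_le_sum_abs _ _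
    _ ≤ ∑ _j : Fin (wdist S p x), K S := Finset.sum_le_sum fun j _ => K_spec (hw j) i
    _ = (wdist S p x : ℤ) * K S := by simp [mul_comm]
    _ ≤ K S * R := by
        rw [mul_comm]
        exact mul_le_mul_of_nonneg_left (by exact_mod_cast h) (K_nonneg S)

/-- finite ball in the word metric -/
noncomputable def ballF (S : Multiset (G m)) (p : G m) (R : ℕ) : Finset (G m) :=
  (Finset.Icc (fun i => p i - K S * R) (fun i => p i + K S * R)).filter
    (fun x => wdist S p x ≤ R)

lemma wdist_le_of_mem {R : ℕ} {x : G m} (h : x ∈ ballF S p R) : wdist S p x ≤ R :=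
  (Finset.mem_filter.mp h).2

lemma mem_ballF (hsym : S.map (fun s => -s) = S)
    (hgen : AddSubgroup.closure {s : G m | s ∈ S} = ⊤) {R : ℕ} {x : G m}
    (h : wdist S p x ≤ R) : x ∈ ballF S p R := by
  refine Finset.mem_filter.mpr ⟨?_, h⟩
  rw [Finset.mem_Icc, Pi.le_def, Pi.le_def]
  constructor <;> intro i
  · have := (abs_le.mp (coord_bound (p := p) hsym hgen h i)).1
    linarith
  · have := (abs_le.mp (coord_bound (p := p) hsym hgen h i)).2
    linarith

lemma ballF_mono {R R' : ℕ} (h : R ≤ R') : ballF S p R ⊆ ballF S p R' := by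
  intro x hx
  rw [ballF, Finset.mem_filter, Finset.mem_Icc, Pi.le_def, Pi.le_def] at hx ⊢
  obtain ⟨⟨h1, h2⟩, h3⟩ := hx
  have hK : K S * R ≤ K S * R' :=
    mul_le_mul_of_nonneg_left (by exact_mod_cast h) (K_nonneg S)
  refine ⟨⟨fun i => ?_, fun i => ?_⟩, h3.trans h⟩
  · have := h1 i; linarith
  · have := h2 i; linarith

lemma card_ballF (S : Multiset (G m)) (p : G m) (R : ℕ) :
    ((ballF S p R).card : ℝ) ≤ (2 * (K S : ℝ) * R + 1) ^ m := by
  have h1 : (ballF S p R).card ≤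
      (Finset.Icc (fun i => p i - K S * R) (fun i => p i + K S * R)).card :=
    Finset.card_le_card (Finset.filter_subset _ _)
  have h2 : ((Finset.Icc (fun i => p i - K S * R) (fun i => p i + K S * R)).card : ℕ)
      = ((2 * K S * R + 1).toNat) ^ m := by
    rw [Pi.card_Icc]
    have hcc : ∀ i : Fin m, (Finset.Icc (p i - K S * R) (p i + K S * R)).card
        = (2 * K S * R + 1).toNat := fun i => by
      rw [Int.card_Icc]; congr 1; ring
    rw [Finset.prod_congr rfl (fun i _ => hcc i), Finset.prod_const, Finset.card_univ,
      Fintype.card_fin]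
  have hnn : (0:ℤ) ≤ 2 * K S * R + 1 := by
    have := K_nonneg S
    positivity
  have h3 : (((2 * K S * R + 1).toNat : ℤ) : ℝ) = 2 * (K S : ℝ) * R + 1 := by
    rw [Int.toNat_of_nonneg hnn]; push_cast; ring
  calc ((ballF S p R).card : ℝ)
      ≤ ((Finset.Icc (fun i => p i - K S * R) (fun i => p i + K S * R)).card : ℝ) := by
        exact_mod_cast h1
    _ = (2 * (K S : ℝ) * R + 1) ^ m := by
        rw [h2, Nat.cast_pow]
        exact congrArg (· ^ m) (by exact_mod_cast h3)

end basics
section sums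
variable {m : ℕ}

lemma sum_shift {F : G m → ℝ} {A Ω : Finset (G m)} (s : G m)
    (hA : ∀ x, F x ≠ 0 → x ∈ A) (hAΩ : A ⊆ Ω) (hAs : ∀ x ∈ A, x - s ∈ Ω) :
    ∑ x ∈ Ω, F (x + s) = ∑ x ∈ Ω, F x := by
  classical
  have h1 : ∑ x ∈ Ω, F (x + s) = ∑ y ∈ Ω.image (· + s), F y :=
    (Finset.sum_image (fun x _ y _ h => by simpa using h)).symm
  have hz : ∀ {T : Finset (G m)}, A ⊆ T → ∑ y ∈ A, F y = ∑ y ∈ T, F y := by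
    intro T hT
    exact Finset.sum_subset hT (fun x _ hx => not_not.mp (mt (hA x) hx))
  have hAim : A ⊆ Ω.image (· + s) := by
    intro x hx
    exact Finset.mem_image.mpr ⟨x - s, hAs x hx, by simp⟩
  rw [h1, ← hz hAim, hz hAΩ]

lemma flipS {S : Multiset (G m)} (hsym : S.map (fun s => -s) = S) (g : G m → ℝ) :
    (S.map g).sum = (S.map fun s => g (-s)).sum := by
  conv_lhs => rw [← hsym]
  rw [Multiset.map_map]
  rfl

lemma swap_sum {ι : Type} (Ω : Finset (G m)) (S : Multiset ι) (F : ι → G m → ℝ) :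
    ∑ x ∈ Ω, (S.map fun s => F s x).sum = (S.map fun s => ∑ x ∈ Ω, F s x).sum := by
  induction S using Multiset.induction with
  | empty => simp
  | cons a s ih => simp [Finset.sum_add_distrib, ih]

end sums

section eta
variable {m : ℕ} {S : Multiset (G m)} {p : G m}

noncomputable def eta (S : Multiset (G m)) (p : G m) (R : ℕ) : G m → ℝ :=
  fun x => max 0 (min 1 (2 - (wdist S p x : ℝ) / R))

lemma eta_nonneg {R : ℕ} (x : G m) : 0 ≤ eta S p R x := le_max_left _ _

lemma eta_le_one {R : ℕ} (x : G m) : eta S p R x ≤ 1 :=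
  max_le zero_le_one (min_le_left _ _)

lemma eta_one {R : ℕ} (hR : 1 ≤ R) {x : G m} (h : wdist S p x ≤ R) : eta S p R x = 1 := by
  have hRpos : (0:ℝ) < R := by exact_mod_cast hR
  have h1 : (wdist S p x : ℝ) / R ≤ 1 := by
    rw [div_le_one hRpos]; exact_mod_cast h
  have : (1:ℝ) ≤ 2 - (wdist S p x : ℝ) / R := by linarith
  rw [eta, min_eq_left this, max_eq_right zero_le_one]

lemma eta_zero {R : ℕ} (hR : 1 ≤ R) {x : G m} (h : ¬ wdist S p x ≤ 2 * R) :
    eta S p R x = 0 := by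
  have hRpos : (0:ℝ) < R := by exact_mod_cast hR
  push_neg at h
  have h2 : (2:ℝ) * R ≤ (wdist S p x : ℝ) := by exact_mod_cast h.le
  have : 2 - (wdist S p x : ℝ) / R ≤ 0 := by
    rw [sub_nonpos, le_div_iff₀ hRpos]; linarith
  rw [eta, max_eq_left ((min_le_right _ _).trans this)]

lemma eta_lip (hsym : S.map (fun s => -s) = S)
    (hgen : AddSubgroup.closure {s : G m | s ∈ S} = ⊤)
    {R : ℕ} (hR : 1 ≤ R) {s : G m} (hs : s ∈ S) (x : G m) :
    |eta S p R (x + s) - eta S p R x| ≤ 1 / R := by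
  have hRpos : (0:ℝ) < R := by exact_mod_cast hR
  set a := 2 - (wdist S p (x + s) : ℝ) / R
  set b := 2 - (wdist S p x : ℝ) / R
  have h1 : |eta S p R (x + s) - eta S p R x| ≤ |min 1 a - min 1 b| := by
    show |max 0 (min 1 a) - max 0 (min 1 b)| ≤ |min 1 a - min 1 b|
    have := abs_max_sub_max_le_max (0:ℝ) (min 1 a) 0 (min 1 b)
    simpa [max_comm] using this
  have h2 : |min 1 a - min 1 b| ≤ |a - b| := by
    have := abs_min_sub_min_le_max (1:ℝ) a 1 b
    simpa using this
  have h3 : |a - b| ≤ 1 / R := by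
    have hab : a - b = ((wdist S p x : ℝ) - (wdist S p (x + s) : ℝ)) / R := by
      simp only [a, b]; ring
    rw [hab, abs_div, abs_of_pos hRpos, div_le_div_iff_of_pos_right hRpos]
    have u1 := wdist_step (p := p) hsym hgen hs x
    have u2 : wdist S p x ≤ wdist S p (x + s) + 1 := by
      have := wdist_step_sub (p := p) hsym hgen hs (x + s)
      simpa using this
    rw [abs_le]
    constructor
    · have : (wdist S p (x+s) : ℝ) ≤ (wdist S p x : ℝ) + 1 := by exact_mod_cast u1
      linarith
    · have : (wdist S p x : ℝ) ≤ (wdist S p (x+s) : ℝ) + 1 := by exact_mod_cast u2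
      linarith
  exact h1.trans (h2.trans h3)

end eta

section cacc
variable {m : ℕ} {S : Multiset (G m)} {p : G m}

lemma amgm {a u e1 e2 ε : ℝ} (h1 : 0 ≤ e1) (h2 : 0 ≤ e2) (hε : 0 ≤ ε)
    (hlip : |e1 - e2| ≤ ε) :
    |a * u * (e1 ^ 2 - e2 ^ 2)| ≤ (1/4) * ((e1 ^ 2 + e2 ^ 2) * a ^ 2) + 2 * ε ^ 2 * u ^ 2 := by
  have key : |a * u * (e1 ^ 2 - e2 ^ 2)| = |a| * |u| * (|e1 - e2| * (e1 + e2)) := by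
    rw [abs_mul, abs_mul]
    congr 1
    have h3 : e1 ^ 2 - e2 ^ 2 = (e1 - e2) * (e1 + e2) := by ring
    rw [h3, abs_mul, abs_of_nonneg (show (0:ℝ) ≤ e1 + e2 by positivity)]
  rw [key]
  have s1 : |a| * |u| * (|e1 - e2| * (e1 + e2)) ≤ |a| * |u| * (ε * (e1 + e2)) :=
    mul_le_mul_of_nonneg_left
      (mul_le_mul_of_nonneg_right hlip (by positivity)) (by positivity)
  have s2 : |a| * |u| * (ε * (e1 + e2)) ≤ (1/8) * ((e1 + e2) ^ 2 * a ^ 2) + 2 * ε ^ 2 * u ^ 2 := by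
    nlinarith [sq_nonneg ((e1 + e2) * |a| / 2 - 2 * ε * |u|), sq_abs a, sq_abs u]
  have s3 : (1/8) * ((e1 + e2) ^ 2 * a ^ 2) ≤ (1/4) * ((e1 ^ 2 + e2 ^ 2) * a ^ 2) := by
    nlinarith [sq_nonneg ((e1 - e2) * a)]
  linarith

lemma sum_map_neg_my {ι : Type} (S : Multiset ι) (f : ι → ℝ) :
    (S.map fun i => -(f i)).sum = -(S.map f).sum := by
  induction S using Multiset.induction with
  | empty => simp
  | cons a s ih => simp only [Multiset.map_cons, Multiset.sum_cons, ih]; ring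

lemma sum_map_const_my {ι : Type} (S : Multiset ι) (c : ℝ) :
    (S.map fun _ => c).sum = (Multiset.card S : ℝ) * c := by
  induction S using Multiset.induction with
  | empty => simp
  | cons a s ih => simp only [Multiset.map_cons, Multiset.sum_cons, ih,
      Multiset.card_cons]; push_cast; ring

lemma gradSq_nonneg (S : Multiset (G m)) (v : G m → ℝ) (x : G m) : 0 ≤ gradSq S v x := by
  apply Multiset.sum_nonneg
  intro y hy
  obtain ⟨t, _, rfl⟩ := Multiset.mem_map.mp hy
  positivity

lemma single_sq_le_gradSq {v : G m → ℝ} {s : G m} (hs : s ∈ S) (x : G m) :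
    (v (x + s) - v x) ^ 2 ≤ gradSq S v x := by
  apply Multiset.single_le_sum
  · intro y hy
    obtain ⟨t, _, rfl⟩ := Multiset.mem_map.mp hy
    positivity
  · exact Multiset.mem_map_of_mem _ hs

lemma cacc (hsym : S.map (fun s => -s) = S)
    (hgen : AddSubgroup.closure {s : G m | s ∈ S} = ⊤)
    {v : G m → ℝ} (hv : ∀ x, lap S v x = 0) {R : ℕ} (hR : 1 ≤ R) :
    ∑ x ∈ ballF S p R, gradSq S v x ≤
      4 * (Multiset.card S : ℝ) / (R : ℝ) ^ 2 * ∑ x ∈ ballF S p (2 * R + 2), (v x) ^ 2 := by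
  classical
  have hRpos : (0:ℝ) < R := by exact_mod_cast hR
  set Ω := ballF S p (2 * R + 2) with hΩdef
  set e := eta S p R with he
  -- translation invariance helper
  have shift : ∀ s ∈ S, ∀ F : G m → ℝ,
      (∀ x, F x ≠ 0 → wdist S p x ≤ 2 * R) →
      ∑ x ∈ Ω, F (x + s) = ∑ x ∈ Ω, F x := by
    intro s hs F hF
    apply sum_shift (A := ballF S p (2 * R + 1)) s
    · intro x hx
      exact mem_ballF hsym hgen ((hF x hx).trans (by omega))
    · exact ballF_mono (by omega)
    · intro x hx
      have h1 := wdist_step_sub (p := p) hsym hgen hs x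
      have h2 := wdist_le_of_mem hx
      exact mem_ballF hsym hgen (by omega)
  have hesupp : ∀ x : G m, e x ≠ 0 → wdist S p x ≤ 2 * R := by
    intro x hx
    by_contra h
    exact hx (eta_zero hR h)
  -- T' = T
  have hTT : (S.map fun s => ∑ x ∈ Ω, (e (x + s)) ^ 2 * (v (x + s) - v x) ^ 2).sum
      = (S.map fun s => ∑ x ∈ Ω, (e x) ^ 2 * (v (x + s) - v x) ^ 2).sum := by
    have step1 : ∀ s ∈ S, ∑ x ∈ Ω, (e (x + s)) ^ 2 * (v (x + s) - v x) ^ 2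
        = ∑ x ∈ Ω, (e x) ^ 2 * (v x - v (x - s)) ^ 2 := by
      intro s hs
      have hsh := shift s hs (fun y => (e y) ^ 2 * (v y - v (y - s)) ^ 2) (by
        intro y hy
        apply hesupp
        intro h0
        apply hy
        rw [h0]; ring)
      rw [← hsh]
      apply Finset.sum_congr rfl
      intro x _
      rw [add_sub_cancel_right]
    rw [Multiset.map_congr rfl step1,
      flipS hsym (fun s => ∑ x ∈ Ω, (e x) ^ 2 * (v x - v (x - s)) ^ 2)]
    apply congrArg Multiset.sum
    apply Multiset.map_congr rfl
    intro s _
    apply Finset.sum_congr rfl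
    intro x _
    rw [sub_neg_eq_add]
    ring
  -- summation by parts : the full double sum vanishes
  have hSBP : (S.map fun s => ∑ x ∈ Ω,
      (v (x + s) - v x) * ((e (x + s)) ^ 2 * v (x + s) - (e x) ^ 2 * v x)).sum = 0 := by
    have expand : ∀ s ∈ S, ∑ x ∈ Ω,
        (v (x + s) - v x) * ((e (x + s)) ^ 2 * v (x + s) - (e x) ^ 2 * v x)
        = (∑ x ∈ Ω, (v x - v (x - s)) * ((e x) ^ 2 * v x))
          - ∑ x ∈ Ω, (v (x + s) - v x) * ((e x) ^ 2 * v x) := by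
      intro s hs
      have p1 : ∑ x ∈ Ω, (v (x + s) - v x) * ((e (x + s)) ^ 2 * v (x + s))
          = ∑ x ∈ Ω, (v x - v (x - s)) * ((e x) ^ 2 * v x) := by
        have hsh := shift s hs (fun y => (v y - v (y - s)) * ((e y) ^ 2 * v y)) (by
          intro y hy
          apply hesupp
          intro h0
          apply hy
          rw [h0]; ring)
        rw [← hsh]
        apply Finset.sum_congr rfl
        intro x _
        rw [add_sub_cancel_right]
      rw [← p1, ← Finset.sum_sub_distrib]
      apply Finset.sum_congr rfl
      intro x _
      ring
    rw [Multiset.map_congr rfl expand, Multiset.sum_map_sub]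
    have lapterm : (S.map fun s => ∑ x ∈ Ω, (v (x + s) - v x) * ((e x) ^ 2 * v x)).sum
        = 0 := by
      rw [← swap_sum]
      apply Finset.sum_eq_zero
      intro x _
      rw [Multiset.sum_map_mul_right]
      have hl : (S.map fun s => v (x + s) - v x).sum = lap S v x := rfl
      rw [hl, hv x, zero_mul]
    have lapterm2 : (S.map fun s => ∑ x ∈ Ω, (v x - v (x - s)) * ((e x) ^ 2 * v x)).sum
        = 0 := by
      rw [flipS hsym (fun s => ∑ x ∈ Ω, (v x - v (x - s)) * ((e x) ^ 2 * v x))]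
      have hneg : ∀ t ∈ S, (fun s => ∑ x ∈ Ω, (v x - v (x - s)) * ((e x) ^ 2 * v x)) (-t)
          = - ∑ x ∈ Ω, (v (x + t) - v x) * ((e x) ^ 2 * v x) := by
        intro t _
        dsimp only
        rw [← Finset.sum_neg_distrib]
        apply Finset.sum_congr rfl
        intro x _
        rw [sub_neg_eq_add]
        ring
      rw [Multiset.map_congr rfl hneg,
        sum_map_neg_my S (fun t => ∑ x ∈ Ω, (v (x + t) - v x) * (e x ^ 2 * v x)),
        lapterm, neg_zero]
    rw [lapterm, lapterm2, sub_zero]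
  -- expansion of the SBP double sum
  have h0 : (S.map fun s => ∑ x ∈ Ω, (e (x + s)) ^ 2 * (v (x + s) - v x) ^ 2).sum
      + (S.map fun s => ∑ x ∈ Ω,
          (v (x + s) - v x) * v x * ((e (x + s)) ^ 2 - (e x) ^ 2)).sum = 0 := by
    rw [← Multiset.sum_map_add]
    rw [← hSBP]
    apply congrArg Multiset.sum
    apply Multiset.map_congr rfl
    intro s _
    rw [← Finset.sum_add_distrib]
    apply Finset.sum_congr rfl
    intro x _
    ring
  set T := (S.map fun s => ∑ x ∈ Ω, (e x) ^ 2 * (v (x + s) - v x) ^ 2).sum with hT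
  set V := ∑ x ∈ Ω, (v x) ^ 2 with hV
  -- bound the error term
  have habs : |(S.map fun s => ∑ x ∈ Ω,
        (v (x + s) - v x) * v x * ((e (x + s)) ^ 2 - (e x) ^ 2)).sum|
      ≤ (1/4) * (S.map fun s => ∑ x ∈ Ω, (e (x + s)) ^ 2 * (v (x + s) - v x) ^ 2).sum
        + (1/4) * T + 2 * (1 / (R:ℝ)) ^ 2 * ((Multiset.card S : ℝ) * V) := by
    calc |(S.map fun s => ∑ x ∈ Ω,
        (v (x + s) - v x) * v x * ((e (x + s)) ^ 2 - (e x) ^ 2)).sum|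
        ≤ ((S.map fun s => ∑ x ∈ Ω,
            (v (x + s) - v x) * v x * ((e (x + s)) ^ 2 - (e x) ^ 2)).map abs).sum :=
          Multiset.abs_sum_le_sum_abs
      _ = (S.map fun s => |∑ x ∈ Ω,
            (v (x + s) - v x) * v x * ((e (x + s)) ^ 2 - (e x) ^ 2)|).sum := by
          rw [Multiset.map_map]; rfl
      _ ≤ (S.map fun s =>
            (1/4) * (∑ x ∈ Ω, (e (x + s)) ^ 2 * (v (x + s) - v x) ^ 2)
            + (1/4) * (∑ x ∈ Ω, (e x) ^ 2 * (v (x + s) - v x) ^ 2)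
            + 2 * (1 / (R:ℝ)) ^ 2 * V).sum := by
          apply Multiset.sum_map_le_sum_map
          intro s hs
          calc |∑ x ∈ Ω, (v (x + s) - v x) * v x * ((e (x + s)) ^ 2 - (e x) ^ 2)|
              ≤ ∑ x ∈ Ω, |(v (x + s) - v x) * v x * ((e (x + s)) ^ 2 - (e x) ^ 2)| :=
                Finset.abs_sum_le_sum_abs _ _
            _ ≤ ∑ x ∈ Ω, ((1/4) * (((e (x + s)) ^ 2 + (e x) ^ 2) * (v (x + s) - v x) ^ 2)
                  + 2 * (1 / (R:ℝ)) ^ 2 * (v x) ^ 2) := by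
                apply Finset.sum_le_sum
                intro x _
                exact amgm (eta_nonneg _) (eta_nonneg _) (by positivity)
                  (eta_lip hsym hgen hR hs x)
            _ = (1/4) * (∑ x ∈ Ω, (e (x + s)) ^ 2 * (v (x + s) - v x) ^ 2)
                + (1/4) * (∑ x ∈ Ω, (e x) ^ 2 * (v (x + s) - v x) ^ 2)
                + 2 * (1 / (R:ℝ)) ^ 2 * V := by
                have hsp : ∑ x ∈ Ω, (((e (x + s)) ^ 2 + (e x) ^ 2) * (v (x + s) - v x) ^ 2)
                    = (∑ x ∈ Ω, (e (x + s)) ^ 2 * (v (x + s) - v x) ^ 2)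
                      + ∑ x ∈ Ω, (e x) ^ 2 * (v (x + s) - v x) ^ 2 := by
                  rw [← Finset.sum_add_distrib]
                  apply Finset.sum_congr rfl
                  intro x _
                  ring
                rw [Finset.sum_add_distrib, ← Finset.mul_sum, ← Finset.mul_sum, hsp, hV]
                ring
      _ = (1/4) * (S.map fun s => ∑ x ∈ Ω, (e (x + s)) ^ 2 * (v (x + s) - v x) ^ 2).sum
          + (1/4) * T + 2 * (1 / (R:ℝ)) ^ 2 * ((Multiset.card S : ℝ) * V) := by
          rw [Multiset.sum_map_add, Multiset.sum_map_add, Multiset.sum_map_mul_left,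
            Multiset.sum_map_mul_left, sum_map_const_my S (2 * (1 / (R:ℝ)) ^ 2 * V)]
          ring
  -- conclude T ≤ (4|S|/R²) V
  have hTbound : T ≤ 4 * (Multiset.card S : ℝ) / (R : ℝ) ^ 2 * V := by
    have h2 : T ≤ (1/2) * T + 2 * (1 / (R:ℝ)) ^ 2 * ((Multiset.card S : ℝ) * V) := by
      have hTeq : T = -(S.map fun s => ∑ x ∈ Ω,
          (v (x + s) - v x) * v x * ((e (x + s)) ^ 2 - (e x) ^ 2)).sum := by
        rw [← hTT] at hT
        linarith [h0, hT.symm]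
      rw [hTT] at habs
      have hT3 : T ≤ |(S.map fun s => ∑ x ∈ Ω,
          (v (x + s) - v x) * v x * ((e (x + s)) ^ 2 - (e x) ^ 2)).sum| := by
        rw [hTeq]
        exact neg_le_abs _
      linarith
    have h3 : (1/2) * T ≤ 2 * (1 / (R:ℝ)) ^ 2 * ((Multiset.card S : ℝ) * V) := by
      linarith
    calc T = 2 * ((1/2) * T) := by ring
      _ ≤ 2 * (2 * (1 / (R:ℝ)) ^ 2 * ((Multiset.card S : ℝ) * V)) := by linarith
      _ = 4 * (Multiset.card S : ℝ) / (R : ℝ) ^ 2 * V := by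
          field_simp
          ring
  -- the left-hand side is at most T
  have hlhs : ∑ x ∈ ballF S p R, gradSq S v x ≤ T := by
    have h1 : ∑ x ∈ ballF S p R, gradSq S v x
        = ∑ x ∈ ballF S p R, (S.map fun s => (e x) ^ 2 * (v (x + s) - v x) ^ 2).sum := by
      apply Finset.sum_congr rfl
      intro x hx
      have hx1 : e x = 1 := eta_one hR (wdist_le_of_mem hx)
      show (S.map fun s => (v (x + s) - v x) ^ 2).sum = _
      apply congrArg Multiset.sum
      apply Multiset.map_congr rfl
      intro s _
      rw [hx1]
      ring
    rw [h1]
    have h2 : ∑ x ∈ ballF S p R, (S.map fun s => (e x) ^ 2 * (v (x + s) - v x) ^ 2).sum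
        ≤ ∑ x ∈ Ω, (S.map fun s => (e x) ^ 2 * (v (x + s) - v x) ^ 2).sum := by
      apply Finset.sum_le_sum_of_subset_of_nonneg (ballF_mono (by omega))
      intro x _ _
      apply Multiset.sum_nonneg
      intro y hy
      obtain ⟨t, _, rfl⟩ := Multiset.mem_map.mp hy
      positivity
    refine h2.trans ?_
    rw [swap_sum]
  exact hlhs.trans hTbound

end cacc

section iterate
variable {m : ℕ} {S : Multiset (G m)} {p : G m}

lemma lap_Dop (S : Multiset (G m)) (g : G m) (v : G m → ℝ) (x : G m) :
    lap S (Dop g v) x = lap S v (x + g) - lap S v x := by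
  unfold lap Dop
  rw [← Multiset.sum_map_sub]
  apply congrArg Multiset.sum
  apply Multiset.map_congr rfl
  intro s _
  have h : x + s + g = x + g + s := by ring
  rw [h]
  ring

lemma harmonic_Dop {v : G m → ℝ} (hv : ∀ x, lap S v x = 0) (g : G m) :
    ∀ x, lap S (Dop g v) x = 0 := fun x => by rw [lap_Dop, hv, hv, sub_zero]

lemma harmonic_DL {u : G m → ℝ} (hu : ∀ x, lap S u x = 0) :
    ∀ l : List (G m), ∀ x, lap S (DL l u) x = 0 := by
  intro l
  induction l with
  | nil => exact hu
  | cons g l ih => exact harmonic_Dop ih g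

lemma sum_sq_ball (hsym : S.map (fun s => -s) = S)
    (hgen : AddSubgroup.closure {s : G m | s ∈ S} = ⊤)
    {u : G m → ℝ} {C d : ℝ} (hd : 0 ≤ d) (hC : 0 ≤ C)
    (hu : ∀ x, |u x| ≤ C * ((wdist S p x : ℝ) + 1) ^ d) {R : ℕ} (hR : 1 ≤ R) :
    ∑ x ∈ ballF S p R, (u x) ^ 2
      ≤ (C ^ 2 * (2:ℝ) ^ (2 * d) * (2 * (K S : ℝ) + 1) ^ m) * (R : ℝ) ^ (2 * d + m) := by
  have hRpos : (0:ℝ) < R := by exact_mod_cast hR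
  have hR1 : (1:ℝ) ≤ R := by exact_mod_cast hR
  have hK : (0:ℝ) ≤ (K S : ℝ) := by exact_mod_cast K_nonneg S
  have hbound : ∀ x ∈ ballF S p R, (u x) ^ 2 ≤ C ^ 2 * ((2:ℝ) * R) ^ (2 * d) := by
    intro x hx
    have h1 : |u x| ≤ C * ((2:ℝ) * R) ^ d := by
      refine (hu x).trans ?_
      refine mul_le_mul_of_nonneg_left ?_ hC
      refine Real.rpow_le_rpow (by positivity) ?_ hd
      have h2 : (wdist S p x : ℝ) ≤ R := by exact_mod_cast wdist_le_of_mem hx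
      linarith
    rw [← sq_abs]
    calc |u x| ^ 2 ≤ (C * ((2:ℝ) * R) ^ d) ^ 2 := pow_le_pow_left₀ (abs_nonneg _) h1 2
      _ = C ^ 2 * ((2:ℝ) * R) ^ (2 * d) := by
          rw [mul_pow]
          congr 1
          rw [← Real.rpow_natCast (((2:ℝ) * R) ^ d) 2, ← Real.rpow_mul (by positivity)]
          congr 1
          push_cast
          ring
  calc ∑ x ∈ ballF S p R, (u x) ^ 2
      ≤ (ballF S p R).card • (C ^ 2 * ((2:ℝ) * R) ^ (2 * d)) :=
        Finset.sum_le_card_nsmul _ _ _ hbound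
    _ = ((ballF S p R).card : ℝ) * (C ^ 2 * ((2:ℝ) * R) ^ (2 * d)) := by
        rw [nsmul_eq_mul]
    _ ≤ ((2 * (K S : ℝ) + 1) * R) ^ m * (C ^ 2 * ((2:ℝ) * R) ^ (2 * d)) := by
        refine mul_le_mul_of_nonneg_right ?_ (by positivity)
        refine (card_ballF S p R).trans ?_
        refine pow_le_pow_left₀ (by positivity) ?_ m
        nlinarith
    _ = (C ^ 2 * (2:ℝ) ^ (2 * d) * (2 * (K S : ℝ) + 1) ^ m) * (R : ℝ) ^ (2 * d + m) := by
        rw [mul_pow, Real.mul_rpow (by norm_num) hRpos.le, Real.rpow_add hRpos,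
          Real.rpow_natCast]
        ring

lemma rpow_shrink {R : ℝ} (hR : 1 ≤ R) {t : ℝ} (h1 : R ≤ t) (h2 : t ≤ 4 * R) (e : ℝ) :
    t ^ e ≤ 4 ^ |e| * R ^ e := by
  have hRpos : (0:ℝ) < R := lt_of_lt_of_le one_pos hR
  rcases le_or_gt 0 e with he | he
  · rw [abs_of_nonneg he]
    calc t ^ e ≤ (4 * R) ^ e := Real.rpow_le_rpow (le_trans hRpos.le h1) h2 he
      _ = 4 ^ e * R ^ e := Real.mul_rpow (by norm_num) hRpos.le
  · rw [abs_of_neg he]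
    have h4 : (1:ℝ) ≤ 4 ^ (-e) := by
      have := Real.rpow_le_rpow_of_exponent_le (show (1:ℝ) ≤ 4 by norm_num)
        (show (0:ℝ) ≤ -e by linarith)
      simpa using this
    calc t ^ e ≤ R ^ e := Real.rpow_le_rpow_of_nonpos hRpos h1 he.le
      _ = 1 * R ^ e := (one_mul _).symm
      _ ≤ 4 ^ (-e) * R ^ e :=
        mul_le_mul_of_nonneg_right h4 (Real.rpow_nonneg hRpos.le e)

lemma iter_bound (hsym : S.map (fun s => -s) = S)
    (hgen : AddSubgroup.closure {s : G m | s ∈ S} = ⊤)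
    {u : G m → ℝ} {C d : ℝ} (hd : 0 ≤ d) (hC : 0 ≤ C)
    (hu : ∀ x, lap S u x = 0)
    (hgrow : ∀ x, |u x| ≤ C * ((wdist S p x : ℝ) + 1) ^ d) :
    ∀ l : List (G m), (∀ s ∈ l, s ∈ S) →
      ∃ A : ℝ, 0 ≤ A ∧ ∀ R : ℕ, 1 ≤ R →
        ∑ x ∈ ballF S p R, (DL l u x) ^ 2
          ≤ A * (R : ℝ) ^ (2 * d + m - 2 * l.length) := by
  intro l
  induction l with
  | nil =>
      intro _
      refine ⟨C ^ 2 * (2:ℝ) ^ (2 * d) * (2 * (K S : ℝ) + 1) ^ m, ?_, ?_⟩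
      · have hK : (0:ℝ) ≤ (K S : ℝ) := by exact_mod_cast K_nonneg S
        positivity
      · intro R hR
        have h := sum_sq_ball (p := p) hsym hgen hd hC hgrow hR
        simpa [DL] using h
  | cons g l ih =>
      intro hmem
      obtain ⟨A, hA, hbd⟩ := ih (fun s hs => hmem s (List.mem_cons_of_mem g hs))
      have hgS : g ∈ S := hmem g List.mem_cons_self
      refine ⟨4 * (Multiset.card S : ℝ) * A * 4 ^ |2 * d + (m:ℝ) - 2 * l.length|,
        mul_nonneg (mul_nonneg (by positivity) hA) (Real.rpow_nonneg (by norm_num) _), ?_⟩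
      intro R hR
      have hRpos : (0:ℝ) < R := by exact_mod_cast hR
      have hR1 : (1:ℝ) ≤ R := by exact_mod_cast hR
      have hharm : ∀ x, lap S (DL l u) x = 0 := harmonic_DL hu l
      have step1 : ∑ x ∈ ballF S p R, (DL (g :: l) u x) ^ 2
          ≤ ∑ x ∈ ballF S p R, gradSq S (DL l u) x := by
        apply Finset.sum_le_sum
        intro x _
        exact single_sq_le_gradSq hgS x
      have step2 := cacc (p := p) hsym hgen hharm hR
      have step3 := hbd (2 * R + 2) (by omega)
      have hcast : ((2 * R + 2 : ℕ) : ℝ) = 2 * (R:ℝ) + 2 := by push_cast; ring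
      have step4 : ((2 * R + 2 : ℕ) : ℝ) ^ (2 * d + (m:ℝ) - 2 * l.length)
          ≤ 4 ^ |2 * d + (m:ℝ) - 2 * l.length| * (R:ℝ) ^ (2 * d + (m:ℝ) - 2 * l.length) := by
        rw [hcast]
        exact rpow_shrink hR1 (by linarith) (by linarith) _
      calc ∑ x ∈ ballF S p R, (DL (g :: l) u x) ^ 2
          ≤ ∑ x ∈ ballF S p R, gradSq S (DL l u) x := step1
        _ ≤ 4 * (Multiset.card S : ℝ) / (R:ℝ) ^ 2
              * ∑ x ∈ ballF S p (2 * R + 2), (DL l u x) ^ 2 := step2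
        _ ≤ 4 * (Multiset.card S : ℝ) / (R:ℝ) ^ 2
              * (A * ((2 * R + 2 : ℕ) : ℝ) ^ (2 * d + (m:ℝ) - 2 * l.length)) := by
            exact mul_le_mul_of_nonneg_left step3 (by positivity)
        _ ≤ 4 * (Multiset.card S : ℝ) / (R:ℝ) ^ 2
              * (A * (4 ^ |2 * d + (m:ℝ) - 2 * l.length|
                  * (R:ℝ) ^ (2 * d + (m:ℝ) - 2 * l.length))) := by
            exact mul_le_mul_of_nonneg_left (mul_le_mul_of_nonneg_left step4 hA)
              (by positivity)
        _ = (4 * (Multiset.card S : ℝ) * A * 4 ^ |2 * d + (m:ℝ) - 2 * l.length|)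
              * ((R:ℝ) ^ (2 * d + (m:ℝ) - 2 * l.length) / (R:ℝ) ^ 2) := by ring
        _ = (4 * (Multiset.card S : ℝ) * A * 4 ^ |2 * d + (m:ℝ) - 2 * l.length|)
              * (R:ℝ) ^ (2 * d + m - 2 * (List.length (g :: l))) := by
            congr 1
            rw [← Real.rpow_natCast (R:ℝ) 2, ← Real.rpow_sub hRpos]
            congr 1
            simp only [List.length_cons]
            push_cast
            ring

lemma DL_vanish (hsym : S.map (fun s => -s) = S)
    (hgen : AddSubgroup.closure {s : G m | s ∈ S} = ⊤)
    {u : G m → ℝ} {C d : ℝ} (hd : 0 ≤ d) (hC : 0 ≤ C)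
    (hu : ∀ x, lap S u x = 0)
    (hgrow : ∀ x, |u x| ≤ C * ((wdist S p x : ℝ) + 1) ^ d)
    {k : ℕ} (hk : 2 * d + (m:ℝ) - 2 * k < 0) :
    ∀ l : List (G m), (∀ s ∈ l, s ∈ S) → l.length = k → ∀ x, DL l u x = 0 := by
  intro l hl hlen x
  obtain ⟨A, hA, hbd⟩ := iter_bound (p := p) hsym hgen hd hC hu hgrow l hl
  rw [hlen] at hbd
  have key : ∀ R : ℕ, max 1 (wdist S p x) ≤ R →
      (DL l u x) ^ 2 ≤ A * (R:ℝ) ^ (2 * d + (m:ℝ) - 2 * k) := by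
    intro R hRx
    have hR1 : 1 ≤ R := le_trans (le_max_left _ _) hRx
    have hxmem : x ∈ ballF S p R :=
      mem_ballF hsym hgen (le_trans (le_max_right _ _) hRx)
    calc (DL l u x) ^ 2 ≤ ∑ y ∈ ballF S p R, (DL l u y) ^ 2 :=
          Finset.single_le_sum (f := fun y => (DL l u y) ^ 2)
            (fun y _ => sq_nonneg _) hxmem
      _ ≤ A * (R:ℝ) ^ (2 * d + (m:ℝ) - 2 * k) := hbd R hR1
  have hlim : Filter.Tendsto (fun R : ℕ => A * (R:ℝ) ^ (2 * d + (m:ℝ) - 2 * k))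
      Filter.atTop (nhds 0) := by
    have h1 : Filter.Tendsto (fun t : ℝ => t ^ (2 * d + (m:ℝ) - 2 * k))
        Filter.atTop (nhds 0) := by
      have h2 := tendsto_rpow_neg_atTop (show (0:ℝ) < -(2 * d + (m:ℝ) - 2 * k) by linarith)
      simpa using h2
    have h3 := (h1.comp tendsto_natCast_atTop_atTop).const_mul A
    simpa using h3
  have hle : (DL l u x) ^ 2 ≤ 0 := by
    apply ge_of_tendsto hlim
    filter_upwards [Filter.eventually_ge_atTop (max 1 (wdist S p x))] with R hR
    exact key R hR
  have hz := le_antisymm hle (sq_nonneg _)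
  exact pow_eq_zero_iff (two_ne_zero) |>.mp hz

lemma invariant_extend (hgen : AddSubgroup.closure {s : G m | s ∈ S} = ⊤)
    {v : G m → ℝ} (hv : ∀ s ∈ S, ∀ x, v (x + s) = v x) :
    ∀ g x, v (x + g) = v x := by
  intro g
  have hg : g ∈ AddSubgroup.closure {s : G m | s ∈ S} := by rw [hgen]; trivial
  induction hg using AddSubgroup.closure_induction with
  | mem s hs => exact hv s hs
  | zero => intro x; rw [add_zero]
  | add a b _ _ iha ihb =>
      intro x
      have h : x + (a + b) = x + a + b := by ring
      rw [h, ihb, iha]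
  | neg a _ iha =>
      intro x
      have h : x = x + -a + a := by ring
      conv_rhs => rw [h, iha]

lemma Dop_comm (a b : G m) (f : G m → ℝ) : Dop a (Dop b f) = Dop b (Dop a f) := by
  funext x
  show (f (x + a + b) - f (x + a)) - (f (x + b) - f x)
      = (f (x + b + a) - f (x + b)) - (f (x + a) - f x)
  have h : x + a + b = x + b + a := by ring
  rw [h]
  ring

lemma DL_perm {l l' : List (G m)} (h : l.Perm l') (f : G m → ℝ) : DL l f = DL l' f := by
  induction h with
  | nil => rfl
  | cons a _ ih => show Dop a (DL _ f) = Dop a (DL _ f); rw [ih]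
  | swap a b l => exact Dop_comm b a (DL l f)
  | trans _ _ ih1 ih2 => rw [ih1, ih2]

lemma all_diffs (hgen : AddSubgroup.closure {s : G m | s ∈ S} = ⊤)
    {u : G m → ℝ} {k : ℕ}
    (base : ∀ l : List (G m), (∀ s ∈ l, s ∈ S) → l.length = k → ∀ x, DL l u x = 0) :
    ∀ l₁ l₂ : List (G m), (∀ s ∈ l₂, s ∈ S) →
      l₁.length + l₂.length = k → ∀ x, DL (l₁ ++ l₂) u x = 0 := by
  intro l₁
  induction l₁ with
  | nil =>
      intro l₂ h2 hlen x
      exact base l₂ h2 (by simpa using hlen) x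
  | cons g l₁ ih =>
      intro l₂ h2 hlen x
      have hinv : ∀ s ∈ S, ∀ y, DL (l₁ ++ l₂) u (y + s) = DL (l₁ ++ l₂) u y := by
        intro s hs y
        have hperm : DL (s :: (l₁ ++ l₂)) u = DL (l₁ ++ s :: l₂) u :=
          DL_perm (List.perm_middle.symm) u
        have h0 : DL (l₁ ++ s :: l₂) u y = 0 := by
          refine ih (s :: l₂) ?_ ?_ y
          · intro t ht
            rcases List.mem_cons.mp ht with h | h
            · exact h ▸ hs
            · exact h2 t h
          · simp only [List.length_cons] at hlen ⊢
            omega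
        have h1 : Dop s (DL (l₁ ++ l₂) u) y = 0 := by
          have h2' : Dop s (DL (l₁ ++ l₂) u) = DL (s :: (l₁ ++ l₂)) u := rfl
          rw [h2', hperm]
          exact h0
        have h3 : DL (l₁ ++ l₂) u (y + s) - DL (l₁ ++ l₂) u y = 0 := h1
        linarith
      have hext := invariant_extend hgen hinv g x
      have hgoal : DL ((g :: l₁) ++ l₂) u x
          = DL (l₁ ++ l₂) u (x + g) - DL (l₁ ++ l₂) u x := rfl
      rw [hgoal, hext, sub_self]

lemma DL_replicate (g : G m) (f : G m → ℝ) :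
    ∀ k, DL (List.replicate k g) f = (Dop g)^[k] f := by
  intro k
  induction k with
  | zero => rfl
  | succ n ih =>
      show Dop g (DL (List.replicate n g) f) = (Dop g)^[n + 1] f
      rw [ih, Function.iterate_succ_apply']

end iterate

section newton

def D1 (f : ℤ → ℝ) : ℤ → ℝ := fun t => f (t + 1) - f t

lemma newton : ∀ (k : ℕ) (g : ℤ → ℝ), (∀ t, (D1^[k] g) t = 0) →
    ∀ t : ℤ, g t = ∑ j ∈ Finset.range k,
      (D1^[j] g 0) * ((∏ i ∈ Finset.range j, ((t:ℝ) - (i:ℕ))) / (j.factorial : ℝ)) := by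
  intro k
  induction k with
  | zero =>
      intro g hg t
      simpa using hg t
  | succ k ih =>
      intro g hg t
      set c : ℕ → ℝ := fun j => D1^[j] g 0 with hc
      set Gf : ℤ → ℝ := fun t => ∑ j ∈ Finset.range (k+1),
        c j * ((∏ i ∈ Finset.range j, ((t:ℝ) - (i:ℕ))) / (j.factorial : ℝ)) with hGf
      have hgh : ∀ t, (D1^[k] (D1 g)) t = 0 := by
        intro t
        have : D1^[k+1] g = D1^[k] (D1 g) := Function.iterate_succ_apply D1 k g
        rw [← this]
        exact hg t
      have hih := ih (D1 g) hgh
      have hstep : ∀ t : ℤ, Gf (t + 1) - Gf t = D1 g t := by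
        intro t
        have hexp : Gf (t + 1) - Gf t = ∑ j ∈ Finset.range (k+1),
            c j * (((∏ i ∈ Finset.range j, (((t:ℝ) + 1) - (i:ℕ)))
              - ∏ i ∈ Finset.range j, ((t:ℝ) - (i:ℕ))) / (j.factorial : ℝ)) := by
          rw [hGf, ← Finset.sum_sub_distrib]
          apply Finset.sum_congr rfl
          intro j _
          push_cast
          ring
        rw [hexp, Finset.sum_range_succ']
        have hzero : c 0 * (((∏ i ∈ Finset.range 0, (((t:ℝ) + 1) - (i:ℕ)))
            - ∏ i ∈ Finset.range 0, ((t:ℝ) - (i:ℕ))) / ((0:ℕ).factorial : ℝ)) = 0 := by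
          simp
        rw [hzero, add_zero]
        have hterm : ∀ j ∈ Finset.range k,
            c (j+1) * (((∏ i ∈ Finset.range (j+1), (((t:ℝ) + 1) - (i:ℕ)))
              - ∏ i ∈ Finset.range (j+1), ((t:ℝ) - (i:ℕ))) / ((j+1).factorial : ℝ))
            = (D1^[j] (D1 g) 0) * ((∏ i ∈ Finset.range j, ((t:ℝ) - (i:ℕ)))
                / (j.factorial : ℝ)) := by
          intro j _
          have e1 : ∏ i ∈ Finset.range (j+1), (((t:ℝ) + 1) - (i:ℕ))
              = ((t:ℝ) + 1) * ∏ i ∈ Finset.range j, ((t:ℝ) - (i:ℕ)) := by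
            rw [Finset.prod_range_succ']
            have e1a : ∀ i ∈ Finset.range j, ((t:ℝ) + 1) - ((i+1 : ℕ) : ℝ)
                = (t:ℝ) - (i:ℕ) := by
              intro i _
              push_cast
              ring
            rw [Finset.prod_congr rfl e1a]
            push_cast
            ring
          have e2 : ∏ i ∈ Finset.range (j+1), ((t:ℝ) - (i:ℕ))
              = (∏ i ∈ Finset.range j, ((t:ℝ) - (i:ℕ))) * ((t:ℝ) - (j:ℕ)) :=
            Finset.prod_range_succ _ _
          have e3 : c (j+1) = D1^[j] (D1 g) 0 := by
            show D1^[j+1] g 0 = D1^[j] (D1 g) 0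
            rw [Function.iterate_succ_apply]
          have e4 : ((j+1).factorial : ℝ) = (j+1 : ℝ) * (j.factorial : ℝ) := by
            rw [Nat.factorial_succ]
            push_cast
            ring
          rw [e1, e2, e3, e4]
          have hjfac : (j.factorial : ℝ) ≠ 0 := by
            exact_mod_cast Nat.factorial_ne_zero j
          field_simp
          ring
        rw [Finset.sum_congr rfl hterm, ← hih t]
      have hzero0 : Gf 0 = g 0 := by
        show ∑ j ∈ Finset.range (k+1),
          c j * ((∏ i ∈ Finset.range j, (((0:ℤ):ℝ) - (i:ℕ))) / (j.factorial : ℝ)) = g 0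
        have h0 : ∀ j ∈ Finset.range (k+1), j ≠ 0 →
            c j * ((∏ i ∈ Finset.range j, (((0:ℤ):ℝ) - (i:ℕ))) / (j.factorial : ℝ)) = 0 := by
          intro j _ hj
          have : ∏ i ∈ Finset.range j, (((0:ℤ):ℝ) - (i:ℕ)) = 0 := by
            apply Finset.prod_eq_zero (Finset.mem_range.mpr (Nat.pos_of_ne_zero hj))
            norm_num
          rw [this]
          simp
        rw [Finset.sum_eq_single 0 h0 (by intro h; simp at h)]
        simp [hc]
      -- conclude by integer induction
      have hmain : ∀ t : ℤ, g t = Gf t := by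
        intro t
        induction t using Int.induction_on with
        | zero => rw [hzero0]
        | succ i ihp =>
            have h1 := hstep i
            have h2 : D1 g i = g (i + 1) - g i := rfl
            rw [h2] at h1
            linarith
        | pred i ihn =>
            have h1 := hstep (-(i:ℤ) - 1)
            have h2 : D1 g (-(i:ℤ) - 1) = g (-(i:ℤ) - 1 + 1) - g (-(i:ℤ) - 1) := rfl
            rw [h2] at h1
            have h3 : (-(i:ℤ) - 1) + 1 = -(i:ℤ) := by ring
            rw [h3] at h1
            linarith
      exact hmain t

end newton

section poly

lemma Dop_iterate_comm {m : ℕ} (a b : G m) (f : G m → ℝ) :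
    ∀ n, (Dop a)^[n] (Dop b f) = Dop b ((Dop a)^[n] f) := by
  intro n
  induction n with
  | zero => rfl
  | succ n ih =>
      rw [Function.iterate_succ_apply', ih, Function.iterate_succ_apply',
        Dop_comm]

lemma Dop_iterate_comm' {m : ℕ} (a b : G m) (f : G m → ℝ) (k j : ℕ) :
    (Dop a)^[k] ((Dop b)^[j] f) = (Dop b)^[j] ((Dop a)^[k] f) := by
  induction j with
  | zero => rfl
  | succ j ih =>
      rw [Function.iterate_succ_apply', Dop_iterate_comm, ih]
      exact (Function.iterate_succ_apply' (Dop b) j ((Dop a)^[k] f)).symm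

lemma Dop_iterate_zero {m : ℕ} (a : G m) :
    ∀ n, (Dop a)^[n] (fun _ => (0:ℝ)) = fun _ => 0 := by
  intro n
  induction n with
  | zero => rfl
  | succ n ih =>
      rw [Function.iterate_succ_apply', ih]
      funext x
      show (0:ℝ) - 0 = 0
      ring

lemma cons_add_single0 {m : ℕ} (t : ℤ) (y : Fin m → ℤ) :
    Fin.cons (t + 1) y = Fin.cons t y + (Pi.single (0 : Fin (m+1)) 1 : Fin (m+1) → ℤ) := by
  funext i
  refine Fin.cases ?_ (fun j => ?_) i
  · simp
  · have h1 : (Pi.single (0 : Fin (m+1)) 1 : Fin (m+1) → ℤ) j.succ = 0 :=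
      Pi.single_eq_of_ne (Fin.succ_ne_zero j) 1
    simp [h1]

lemma cons_add_single_succ {m : ℕ} (t : ℤ) (y : Fin m → ℤ) (i : Fin m) :
    Fin.cons t (y + (Pi.single i 1 : Fin m → ℤ)) = Fin.cons t y + (Pi.single i.succ 1 : Fin (m+1) → ℤ) := by
  funext j
  refine Fin.cases ?_ (fun j' => ?_) j
  · have h1 : (Pi.single i.succ 1 : Fin (m+1) → ℤ) 0 = 0 :=
      Pi.single_eq_of_ne (Fin.succ_ne_zero i).symm 1
    simp [h1]
  · have h2 : (Pi.single i 1 : Fin m → ℤ) j' = (Pi.single i.succ 1 : Fin (m+1) → ℤ) j'.succ := by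
      rcases eq_or_ne j' i with h | h
      · subst h; simp
      · rw [Pi.single_eq_of_ne h 1,
          Pi.single_eq_of_ne (fun hh => h (Fin.succ_injective _ hh)) 1]
    simp [h2]

lemma bridge1 {m : ℕ} (f : (Fin (m+1) → ℤ) → ℝ) (y : Fin m → ℤ) :
    ∀ j t, (D1^[j] (fun t => f (Fin.cons t y))) t
      = ((Dop (Pi.single 0 1))^[j] f) (Fin.cons t y) := by
  intro j
  induction j with
  | zero => intro t; rfl
  | succ j ih =>
      intro t
      have lhs : D1^[j+1] (fun s => f (Fin.cons s y)) t
          = D1^[j] (fun s => f (Fin.cons s y)) (t+1)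
            - D1^[j] (fun s => f (Fin.cons s y)) t := by
        rw [Function.iterate_succ_apply']
        rfl
      have rhs : (Dop (Pi.single 0 1))^[j+1] f (Fin.cons t y)
          = (Dop (Pi.single 0 1))^[j] f (Fin.cons (t+1) y)
            - (Dop (Pi.single 0 1))^[j] f (Fin.cons t y) := by
        rw [Function.iterate_succ_apply']
        have hd : Dop (Pi.single 0 1) ((Dop (Pi.single 0 1))^[j] f) (Fin.cons t y)
            = (Dop (Pi.single 0 1))^[j] f (Fin.cons t y + Pi.single 0 1)
              - (Dop (Pi.single 0 1))^[j] f (Fin.cons t y) := rfl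
        rw [hd, ← cons_add_single0]
      rw [lhs, rhs, ih, ih]

lemma bridge_succ {m : ℕ} (F : (Fin (m+1) → ℤ) → ℝ) (i : Fin m) (t : ℤ) :
    ∀ (k : ℕ) (y : Fin m → ℤ), ((Dop (Pi.single i 1))^[k] (fun y => F (Fin.cons t y))) y
      = ((Dop (Pi.single i.succ 1))^[k] F) (Fin.cons t y) := by
  intro k
  induction k with
  | zero => intro y; rfl
  | succ k ih =>
      intro y
      have lhs : (Dop (Pi.single i 1))^[k+1] (fun y => F (Fin.cons t y)) y
          = (Dop (Pi.single i 1))^[k] (fun y => F (Fin.cons t y)) (y + Pi.single i 1)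
            - (Dop (Pi.single i 1))^[k] (fun y => F (Fin.cons t y)) y := by
        rw [Function.iterate_succ_apply']
        rfl
      have rhs : (Dop (Pi.single i.succ 1))^[k+1] F (Fin.cons t y)
          = (Dop (Pi.single i.succ 1))^[k] F (Fin.cons t (y + Pi.single i 1))
            - (Dop (Pi.single i.succ 1))^[k] F (Fin.cons t y) := by
        rw [Function.iterate_succ_apply']
        have hd : Dop (Pi.single i.succ 1) ((Dop (Pi.single i.succ 1))^[k] F) (Fin.cons t y)
            = (Dop (Pi.single i.succ 1))^[k] F (Fin.cons t y + Pi.single i.succ 1)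
              - (Dop (Pi.single i.succ 1))^[k] F (Fin.cons t y) := rfl
        rw [hd, ← cons_add_single_succ]
      rw [lhs, rhs, ih, ih]

lemma poly_of_diff : ∀ (m k : ℕ) (f : (Fin m → ℤ) → ℝ),
    (∀ i : Fin m, ∀ x, ((Dop (Pi.single i 1))^[k] f) x = 0) →
    ∃ P : MvPolynomial (Fin m) ℝ, ∀ x, f x = MvPolynomial.eval (fun i => (x i : ℝ)) P := by
  intro m
  induction m with
  | zero =>
      intro k f _
      refine ⟨MvPolynomial.C (f 0), fun x => ?_⟩
      have hx : x = 0 := funext fun i => i.elim0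
      rw [hx, MvPolynomial.eval_C]
  | succ m ih =>
      intro k f hf
      have hgj_diff : ∀ j : ℕ, ∀ i : Fin m, ∀ y,
          ((Dop (Pi.single i 1))^[k]
            (fun y => ((Dop (Pi.single 0 1))^[j] f) (Fin.cons 0 y))) y = 0 := by
        intro j i y
        rw [bridge_succ ((Dop (Pi.single 0 1))^[j] f) i 0 k y,
          Dop_iterate_comm' (Pi.single i.succ 1) (Pi.single 0 1) f k j]
        have hzero : ((Dop (Pi.single i.succ 1))^[k] f) = fun _ => 0 :=
          funext fun x => hf i.succ x
        rw [hzero, Dop_iterate_zero]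
      choose Pj hPj using fun j : ℕ =>
        ih k (fun y => ((Dop (Pi.single 0 1))^[j] f) (Fin.cons 0 y)) (hgj_diff j)
      refine ⟨∑ j ∈ Finset.range k, MvPolynomial.C ((j.factorial : ℝ)⁻¹)
        * ((∏ i ∈ Finset.range j, (MvPolynomial.X 0 - MvPolynomial.C (i:ℝ)))
          * MvPolynomial.rename Fin.succ (Pj j)), fun x => ?_⟩
      have hD : ∀ t, (D1^[k] (fun t => f (Fin.cons t (Fin.tail x)))) t = 0 := by
        intro t
        rw [bridge1 f (Fin.tail x) k t]
        exact hf 0 _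
      have hnew := newton k (fun t => f (Fin.cons t (Fin.tail x))) hD (x 0)
      have hx : f x = f (Fin.cons (x 0) (Fin.tail x)) := by rw [Fin.cons_self_tail]
      rw [hx, hnew, map_sum]
      apply Finset.sum_congr rfl
      intro j _
      have hcoef : D1^[j] (fun t => f (Fin.cons t (Fin.tail x))) 0
          = MvPolynomial.eval (fun i => ((Fin.tail x i : ℤ) : ℝ)) (Pj j) := by
        rw [bridge1 f (Fin.tail x) j 0]
        exact hPj j (Fin.tail x)
      rw [hcoef, MvPolynomial.eval_mul, MvPolynomial.eval_C, MvPolynomial.eval_mul,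
        map_prod, MvPolynomial.eval_rename]
      have hfac : ∀ i ∈ Finset.range j,
          MvPolynomial.eval (fun i => (x i : ℝ)) (MvPolynomial.X 0 - MvPolynomial.C (i:ℝ))
            = ((x 0 : ℤ) : ℝ) - (i:ℕ) := by
        intro i _
        rw [map_sub, MvPolynomial.eval_X, MvPolynomial.eval_C]
      rw [Finset.prod_congr rfl hfac]
      have htail : (fun i => (x i : ℝ)) ∘ Fin.succ = fun i => ((Fin.tail x i : ℤ) : ℝ) := rfl
      rw [htail]
      ring

end poly

section degree

lemma int_point : ∀ (m : ℕ) (Q : MvPolynomial (Fin m) ℝ), Q ≠ 0 →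
    ∃ y : Fin m → ℤ, MvPolynomial.eval (fun i => (y i : ℝ)) Q ≠ 0 := by
  intro m
  induction m with
  | zero =>
      intro Q hQ
      refine ⟨0, ?_⟩
      rw [MvPolynomial.eq_C_of_isEmpty Q, MvPolynomial.eval_C]
      intro h
      apply hQ
      rw [MvPolynomial.eq_C_of_isEmpty Q, h, map_zero]
  | succ m ih =>
      intro Q hQ
      set q := MvPolynomial.finSuccEquiv ℝ m Q with hq
      have hq0 : q ≠ 0 := by
        intro h
        apply hQ
        exact (MvPolynomial.finSuccEquiv ℝ m).injective (by rw [← hq, h, map_zero])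
      have hlc : q.leadingCoeff ≠ 0 := Polynomial.leadingCoeff_ne_zero.mpr hq0
      obtain ⟨y', hy'⟩ := ih q.leadingCoeff hlc
      have hq' : q.map (MvPolynomial.eval (fun i => ((y' i : ℤ) : ℝ))) ≠ 0 := by
        intro h
        apply hy'
        have hcm := Polynomial.coeff_map (MvPolynomial.eval (fun i => ((y' i : ℤ) : ℝ)))
          q.natDegree (p := q)
        rw [h, Polynomial.coeff_zero] at hcm
        rw [Polynomial.leadingCoeff]
        exact hcm.symm
      have hroots := Polynomial.finite_setOf_isRoot hq'
      have hnsub : ¬ (Set.range (fun n : ℤ => (n:ℝ))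
          ⊆ {x | (q.map (MvPolynomial.eval (fun i => ((y' i : ℤ) : ℝ)))).IsRoot x}) := by
        intro hsub
        exact (Set.infinite_range_of_injective
          (fun a b h => by exact_mod_cast h)) (hroots.subset hsub)
      obtain ⟨x0, hx0mem, hx0⟩ := Set.not_subset.mp hnsub
      obtain ⟨a, rfl⟩ := hx0mem
      refine ⟨Fin.cons a y', ?_⟩
      have heval := MvPolynomial.eval_eq_eval_mv_eval'
        (fun i => ((y' i : ℤ) : ℝ)) ((a : ℤ) : ℝ) Q
      have hcn : (fun i => ((Fin.cons a y' : Fin (m+1) → ℤ) i : ℝ))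
          = Fin.cons ((a : ℤ) : ℝ) (fun i => ((y' i : ℤ) : ℝ)) := by
        funext i
        refine Fin.cases ?_ (fun j => ?_) i
        · simp only [Fin.cons_zero]
        · simp only [Fin.cons_succ]
      rw [hcn, heval]
      exact hx0

lemma eval_homog {m n : ℕ} {Q : MvPolynomial (Fin m) ℝ} (hQ : Q.IsHomogeneous n)
    (c : ℝ) (y : Fin m → ℝ) :
    MvPolynomial.eval (fun i => c * y i) Q = c ^ n * MvPolynomial.eval y Q := by
  rw [MvPolynomial.eval_eq, MvPolynomial.eval_eq, Finset.mul_sum]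
  apply Finset.sum_congr rfl
  intro μ hμ
  have hdeg : μ.degree = n := by
    by_contra h
    exact MvPolynomial.mem_support_iff.mp hμ (hQ.coeff_eq_zero h)
  have hprod : ∏ i ∈ μ.support, (c * y i) ^ μ i
      = c ^ n * ∏ i ∈ μ.support, (y i) ^ μ i := by
    have h1 : ∀ i ∈ μ.support, (c * y i) ^ μ i = c ^ μ i * (y i) ^ μ i :=
      fun i _ => mul_pow _ _ _
    have hsum : ∑ i ∈ μ.support, μ i = n := by rw [← hdeg]; rfl
    rw [Finset.prod_congr rfl h1, Finset.prod_mul_distrib,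
      Finset.prod_pow_eq_pow_sum, hsum]
  rw [hprod]
  ring

lemma deg_le {m : ℕ} {S : Multiset (G m)} {p : G m}
    (hsym : S.map (fun s => -s) = S)
    (hgen : AddSubgroup.closure {s : G m | s ∈ S} = ⊤)
    {d : ℝ} (hd : 0 ≤ d) {C : ℝ} (hC : 0 ≤ C) {P : MvPolynomial (Fin m) ℝ}
    (hgrow : ∀ x : G m, |MvPolynomial.eval (fun i => (x i : ℝ)) P|
      ≤ C * ((wdist S p x : ℝ) + 1) ^ d) :
    (P.totalDegree : ℝ) ≤ d := by
  by_contra hlt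
  push_neg at hlt
  set e := P.totalDegree with he
  have hP0 : P ≠ 0 := by
    intro h
    rw [he, h, MvPolynomial.totalDegree_zero] at hlt
    exact absurd hlt (by push_cast; linarith)
  have he1 : 1 ≤ e := by
    by_contra h
    push_neg at h
    have he0 : e = 0 := by omega
    rw [he0] at hlt
    exact absurd hlt (by push_cast; linarith)
  have hQ0 : MvPolynomial.homogeneousComponent e P ≠ 0 := by
    obtain ⟨μ, hμmem, hμdeg⟩ := Finset.exists_mem_eq_sup P.support
      (MvPolynomial.support_nonempty.mpr hP0) (fun μ => μ.sum fun _ n => n)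
    have hdegμ : μ.degree = e := by
      rw [he, MvPolynomial.totalDegree, hμdeg]
      rfl
    intro h
    have hcoeff := MvPolynomial.coeff_homogeneousComponent e P μ
    rw [h, hdegμ] at hcoeff
    simp only [MvPolynomial.coeff_zero, if_true, if_pos rfl] at hcoeff
    exact (MvPolynomial.mem_support_iff.mp hμmem) hcoeff.symm
  obtain ⟨y, hy⟩ := int_point m _ hQ0
  obtain ⟨L, wy, hwy, hsumy⟩ := exists_word hsym hgen y
  have hray : ∀ n : ℕ, wdist S p (n • y) ≤ wdist S p 0 + n * L := by
    intro n
    induction n with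
    | zero => simpa using le_refl (wdist S p 0)
    | succ n ihn =>
        have h1 : (n + 1) • y = n • y + ∑ i, wy i := by rw [succ_nsmul, hsumy]
        rw [h1]
        have h2 := wdist_add_le hsym hgen p (n • y) wy hwy
        have h3 : (n + 1) * L = n * L + L := by ring
        omega
  have hscale : ∀ n : ℕ, MvPolynomial.eval (fun j => (((n • y : G m) j : ℤ) : ℝ)) P
      = ∑ i ∈ Finset.range (e + 1),
          (n : ℝ) ^ i * MvPolynomial.eval (fun j => (y j : ℝ))
            (MvPolynomial.homogeneousComponent i P) := by
    intro n
    have hpt : (fun j => (((n • y : G m) j : ℤ) : ℝ)) = fun j => (n : ℝ) * (y j : ℝ) := by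
      funext j
      simp only [Pi.smul_apply, nsmul_eq_mul]
      push_cast
      ring
    rw [hpt]
    conv_lhs => rw [← MvPolynomial.sum_homogeneousComponent P, ← he]
    rw [map_sum]
    apply Finset.sum_congr rfl
    intro i _
    rw [eval_homog (MvPolynomial.homogeneousComponent_isHomogeneous i P) (n : ℝ) _]
  set C2 := C * (((wdist S p 0 : ℝ) + L + 1)) ^ d with hC2
  have hC2n : 0 ≤ C2 := by positivity
  have hgrow2 : ∀ n : ℕ, 1 ≤ n →
      |∑ i ∈ Finset.range (e + 1),
          (n : ℝ) ^ i * MvPolynomial.eval (fun j => (y j : ℝ))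
            (MvPolynomial.homogeneousComponent i P)|
        ≤ C2 * (n : ℝ) ^ d := by
    intro n hn
    rw [← hscale n]
    refine (hgrow _).trans ?_
    have hn1 : (1 : ℝ) ≤ n := by exact_mod_cast hn
    have hw0 : (0:ℝ) ≤ (wdist S p 0 : ℝ) := by positivity
    have hL0 : (0:ℝ) ≤ (L : ℝ) := by positivity
    have h1 : (wdist S p (n • y) : ℝ) + 1 ≤ ((wdist S p 0 : ℝ) + L + 1) * n := by
      have h2 : (wdist S p (n • y) : ℝ) ≤ (wdist S p 0 : ℝ) + n * L := by
        exact_mod_cast hray n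
      nlinarith
    calc C * ((wdist S p (n • y) : ℝ) + 1) ^ d
        ≤ C * ((((wdist S p 0 : ℝ) + L + 1)) * n) ^ d := by
          refine mul_le_mul_of_nonneg_left ?_ hC
          exact Real.rpow_le_rpow (by positivity) h1 hd
      _ = C2 * (n : ℝ) ^ d := by
          rw [Real.mul_rpow (by positivity) (by positivity), hC2]
          ring
  set c : ℕ → ℝ := fun i => MvPolynomial.eval (fun j => (y j : ℝ))
    (MvPolynomial.homogeneousComponent i P) with hcdef
  have hce : c e ≠ 0 := hy
  set B := ∑ i ∈ Finset.range e, |c i| with hB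
  have hBn : 0 ≤ B := Finset.sum_nonneg fun i _ => abs_nonneg _
  have hfinal : ∀ n : ℕ, 1 ≤ n →
      |c e| ≤ B * (1 / (n : ℝ)) + C2 * (n : ℝ) ^ (d - (e : ℝ)) := by
    intro n hn
    have hnpos : (0:ℝ) < n := by exact_mod_cast hn
    have hn1 : (1:ℝ) ≤ n := by exact_mod_cast hn
    have hsplit : ∑ i ∈ Finset.range (e + 1), (n : ℝ) ^ i * c i
        = (∑ i ∈ Finset.range e, (n : ℝ) ^ i * c i) + (n : ℝ) ^ e * c e :=
      Finset.sum_range_succ _ _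
    have h1 : |∑ i ∈ Finset.range e, (n : ℝ) ^ i * c i| ≤ B * (n : ℝ) ^ (e - 1) := by
      calc |∑ i ∈ Finset.range e, (n : ℝ) ^ i * c i|
          ≤ ∑ i ∈ Finset.range e, |(n : ℝ) ^ i * c i| := Finset.abs_sum_le_sum_abs _ _
        _ ≤ ∑ i ∈ Finset.range e, |c i| * (n : ℝ) ^ (e - 1) := by
            apply Finset.sum_le_sum
            intro i hi
            rw [abs_mul, abs_pow, abs_of_pos hnpos, mul_comm]
            refine mul_le_mul_of_nonneg_left ?_ (abs_nonneg _)
            exact pow_le_pow_right₀ hn1 (by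
              have := Finset.mem_range.mp hi
              omega)
        _ = B * (n : ℝ) ^ (e - 1) := by rw [hB, Finset.sum_mul]
    have h2 : |(n : ℝ) ^ e * c e| ≤ |∑ i ∈ Finset.range (e + 1), (n : ℝ) ^ i * c i|
        + |∑ i ∈ Finset.range e, (n : ℝ) ^ i * c i| := by
      have hrw : (n : ℝ) ^ e * c e = (∑ i ∈ Finset.range (e + 1), (n : ℝ) ^ i * c i)
          - ∑ i ∈ Finset.range e, (n : ℝ) ^ i * c i := by
        rw [hsplit]; ring
      rw [hrw, sub_eq_add_neg]
      exact (abs_add_le _ _).trans (by rw [abs_neg])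
    have hkey : |c e| * (n : ℝ) ^ e ≤ B * (n : ℝ) ^ (e - 1) + C2 * (n : ℝ) ^ d := by
      have h3 : |(n : ℝ) ^ e * c e| = |c e| * (n : ℝ) ^ e := by
        rw [abs_mul, abs_pow, abs_of_pos hnpos, mul_comm]
      rw [← h3]
      have h4 := hgrow2 n hn
      calc |(n : ℝ) ^ e * c e|
          ≤ |∑ i ∈ Finset.range (e + 1), (n : ℝ) ^ i * c i|
            + |∑ i ∈ Finset.range e, (n : ℝ) ^ i * c i| := h2
        _ ≤ C2 * (n : ℝ) ^ d + B * (n : ℝ) ^ (e - 1) := add_le_add h4 h1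
        _ = B * (n : ℝ) ^ (e - 1) + C2 * (n : ℝ) ^ d := by ring
    have hpe : (0:ℝ) < (n : ℝ) ^ e := pow_pos hnpos e
    have hdiv : |c e| ≤ (B * (n : ℝ) ^ (e - 1) + C2 * (n : ℝ) ^ d) / (n : ℝ) ^ e := by
      rw [le_div_iff₀ hpe]
      exact hkey
    have hpow : (n : ℝ) ^ e = (n : ℝ) ^ (e - 1) * n := by
      conv_lhs => rw [show e = (e - 1) + 1 by omega]
      rw [pow_succ]
    have heq : B * (1 / (n : ℝ)) + C2 * (n : ℝ) ^ (d - (e : ℝ))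
        = (B * (n : ℝ) ^ (e - 1) + C2 * (n : ℝ) ^ d) / (n : ℝ) ^ e := by
      rw [eq_div_iff (ne_of_gt hpe), add_mul]
      congr 1
      · rw [hpow]
        have hne2 : (n : ℝ) ≠ 0 := ne_of_gt hnpos
        field_simp
      · rw [mul_assoc, ← Real.rpow_natCast (n : ℝ) e, ← Real.rpow_add hnpos]
        norm_num
    exact hdiv.trans_eq heq.symm
  have hlim : Filter.Tendsto
      (fun n : ℕ => B * (1 / (n : ℝ)) + C2 * (n : ℝ) ^ (d - (e : ℝ)))
      Filter.atTop (nhds 0) := by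
    have l1 : Filter.Tendsto (fun n : ℕ => B * (1 / (n : ℝ))) Filter.atTop (nhds 0) := by
      have := tendsto_one_div_atTop_nhds_zero_nat.const_mul B
      simpa using this
    have l2 : Filter.Tendsto (fun n : ℕ => C2 * (n : ℝ) ^ (d - (e : ℝ)))
        Filter.atTop (nhds 0) := by
      have h1 : Filter.Tendsto (fun t : ℝ => t ^ (d - (e : ℝ))) Filter.atTop (nhds 0) := by
        have h2 := tendsto_rpow_neg_atTop (show (0:ℝ) < -(d - (e : ℝ)) by
          have : d < (e : ℝ) := hlt
          linarith)
        simpa using h2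
      have h3 := (h1.comp tendsto_natCast_atTop_atTop).const_mul C2
      simpa using h3
    have := l1.add l2
    simpa using this
  have habs : |c e| ≤ 0 := by
    apply ge_of_tendsto hlim
    filter_upwards [Filter.eventually_ge_atTop 1] with n hn
    exact hfinal n hn
  exact hce (abs_eq_zero.mp (le_antisymm habs (abs_nonneg _)))

end degree

end TFH

/-- **Heilbronn's theorem, torsion-free case** (Theorem 4.1). On the Cayley graph of
`G ≅ ℤ^m` with any finite symmetric generating set, every polynomial growth harmonic
function of order at most `d` is the restriction to `ℤ^m` of a polynomial on `ℝ^m` of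
degree at most `d`: `H^d(G,S) ⊆ P^d(ℤ^m)`. -/
theorem torsion_free_heilbronn (m : ℕ) (S : Multiset (Fin m → ℤ))
    (hsym : S.map (fun s => -s) = S)
    (hgen : AddSubgroup.closure {s : Fin m → ℤ | s ∈ S} = ⊤)
    (p : Fin m → ℤ) (d : ℝ) (hd : 0 ≤ d) :
    ∀ f ∈ HdSet S p d, ∃ P : MvPolynomial (Fin m) ℝ,
      (P.totalDegree : ℝ) ≤ d ∧
      ∀ x : Fin m → ℤ, f x = MvPolynomial.eval (fun i => (x i : ℝ)) P := by
  intro f hf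
  simp only [HdSet, Set.mem_setOf_eq] at hf
  obtain ⟨hharm, C, hgrow⟩ := hf
  have hC : 0 ≤ C := by
    have h1 := (abs_nonneg (f p)).trans (hgrow p)
    have h2 : (0:ℝ) < ((wdist S p p : ℝ) + 1) ^ d :=
      Real.rpow_pos_of_pos (by positivity) d
    nlinarith
  have hkneg : 2 * d + (m:ℝ) - 2 * ((Nat.ceil d + m + 1 : ℕ) : ℝ) < 0 := by
    have h1 := Nat.le_ceil d
    push_cast
    linarith
  have base := TFH.DL_vanish (p := p) hsym hgen hd hC hharm hgrow hkneg
  have hdiff : ∀ i : Fin m, ∀ x,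
      ((TFH.Dop (Pi.single i 1))^[Nat.ceil d + m + 1] f) x = 0 := by
    intro i x
    have h1 := TFH.all_diffs hgen base
      (List.replicate (Nat.ceil d + m + 1) (Pi.single i 1)) []
      (by intro s hs; exact absurd hs List.not_mem_nil) (by simp) x
    rw [List.append_nil] at h1
    have h2 := TFH.DL_replicate (Pi.single i 1) f (Nat.ceil d + m + 1)
    rw [← h2]
    exact h1
  obtain ⟨P, hP⟩ := TFH.poly_of_diff m (Nat.ceil d + m + 1) f hdiff
  refine ⟨P, ?_, hP⟩
  exact TFH.deg_le hsym hgen hd hC (fun x => by rw [← hP x]; exact hgrow x)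
end

section
/- Let S be a finite symmetric generating set of ℤ^m and k ≥ 2. Then the discrete Laplacian L^S : P^k(ℤ^m) → P^{k-2}(ℤ^m) is a surjective linear map: for every polynomial g of degree at most k−2 restricted to ℤ^m, there exists a polynomial f of degree at most k restricted to ℤ^m with L^S f = g. -/
open MvPolynomial

/-- `P^k(Z^m)`: restrictions to `Z^m` of real polynomials on `R^m` of degree at most `k`. -/
noncomputable def PolySet (m k : Nat) : Set ((Fin m -> Int) -> Real) :=
  {u | exists P : MvPolynomial (Fin m) Real, P.totalDegree <= k /\
        forall x : Fin m -> Int, u x = MvPolynomial.eval (fun i => (x i : Real)) P}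


namespace LapSurj

noncomputable section

variable {m : ℕ}

abbrev Rp (m : ℕ) := MvPolynomial (Fin m) ℝ

/-- shift by `s`: `P(X) ↦ P(X + s)` -/
def sh (s : Fin m → ℝ) : Rp m →ₐ[ℝ] Rp m :=
  aeval (fun i => X i + C (s i))

lemma sh_X (s : Fin m → ℝ) (i : Fin m) : sh s (X i) = X i + C (s i) := by
  simp [sh]

lemma sh_C (s : Fin m → ℝ) (c : ℝ) : sh s (C c) = C c := by
  simp [sh]

lemma sh_sh (a b : Fin m → ℝ) (P : Rp m) : sh a (sh b P) = sh (a + b) P := by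
  have : (sh a).comp (sh b) = sh (a + b) := by
    apply MvPolynomial.algHom_ext
    intro i
    simp [sh, map_add, aeval_X, aeval_C, add_assoc]
  calc sh a (sh b P) = ((sh a).comp (sh b)) P := rfl
    _ = sh (a + b) P := by rw [this]

lemma sh_zero (P : Rp m) : sh (0 : Fin m → ℝ) P = P := by
  have : sh (0 : Fin m → ℝ) = AlgHom.id ℝ (Rp m) := by
    apply MvPolynomial.algHom_ext
    intro i
    simp [sh]
  rw [this]; rfl

lemma degree_le_totalDegree {P : Rp m} {d : Fin m →₀ ℕ} (h : d ∈ P.support) :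
    d.degree ≤ P.totalDegree := le_totalDegree h

lemma fdegree_add (a b : Fin m →₀ ℕ) : (a + b).degree = a.degree + b.degree := by
  simp only [Finsupp.degree_eq_weight_one, map_add]

lemma fdegree_single (i : Fin m) (b : ℕ) : (Finsupp.single i b).degree = b := by
  rcases eq_or_ne b 0 with rfl | hb
  · simp [Finsupp.degree]
  · rw [Finsupp.degree_apply, Finsupp.support_single_ne_zero _ hb]
    simp

/-- `(X i + c)^b - X i ^ b` has total degree `< b` (for `b ≥ 1`). -/
lemma pow_sub_deg (i : Fin m) (c : ℝ) (b : ℕ) (hb : 1 ≤ b) :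
    ((X i + C c) ^ b - X i ^ b : Rp m).totalDegree < b := by
  have h := add_pow (X i : Rp m) (C c) b
  rw [Finset.sum_range_succ] at h
  have h2 : ((X i + C c) ^ b - X i ^ b : Rp m)
      = ∑ k ∈ Finset.range b, X i ^ k * C c ^ (b - k) * (b.choose k : Rp m) := by
    rw [h]; simp
  rw [h2]
  apply lt_of_le_of_lt (totalDegree_finset_sum _ _)
  apply (Finset.sup_lt_iff (show ⊥ < b from hb)).2
  intro k hk
  have hk' : k < b := Finset.mem_range.1 hk
  have h1 : ((X i : Rp m) ^ k).totalDegree ≤ k := by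
    simpa using totalDegree_pow (X i : Rp m) k
  have h3 : ((C c : Rp m) ^ (b-k)).totalDegree = 0 := by
    rw [← C_pow]; exact totalDegree_C _
  have h4 : (((b.choose k : ℕ) : Rp m)).totalDegree = 0 := by
    rw [← C_eq_coe_nat]; exact totalDegree_C _
  have := totalDegree_mul (X i ^ k * C c ^ (b-k) : Rp m) ((b.choose k : ℕ) : Rp m)
  have := totalDegree_mul ((X i : Rp m) ^ k) ((C c : Rp m) ^ (b-k))
  omega

/-- Support elements of `sh s (monomial α 1) - monomial α 1` have degree `< α.degree`. -/
lemma sh_monomial_support (s : Fin m → ℝ) (α : Fin m →₀ ℕ) :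
    ∀ d ∈ (sh s (monomial α (1:ℝ)) - monomial α 1).support, d.degree < α.degree := by
  classical
  induction α using Finsupp.induction with
  | zero =>
      intro d hd
      exfalso
      have : (monomial (0 : Fin m →₀ ℕ) (1:ℝ)) = (1 : Rp m) := by
        simp [monomial_eq]
      rw [this, map_one, sub_self] at hd
      simp at hd
  | single_add i b α' hi hb IH =>
      intro d hd
      have hmon : (monomial (Finsupp.single i b + α') (1:ℝ) : Rp m)
          = X i ^ b * monomial α' 1 := by
        rw [X_pow_eq_monomial, monomial_mul, one_mul]
      have hsplit : sh s (monomial (Finsupp.single i b + α') (1:ℝ)) - monomial (Finsupp.single i b + α') 1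
          = (X i + C (s i)) ^ b * (sh s (monomial α' 1) - monomial α' 1)
            + ((X i + C (s i)) ^ b - X i ^ b) * monomial α' 1 := by
        rw [hmon, map_mul, map_pow, sh_X]
        ring
      rw [hsplit] at hd
      have hd' := MvPolynomial.support_add hd
      rw [fdegree_add, fdegree_single]
      rcases Finset.mem_union.1 hd' with h1 | h1
      · obtain ⟨d1, hd1, d2, hd2, rfl⟩ := Finset.mem_add.1 (support_mul _ _ h1)
        have hb1 : d1.degree ≤ b := by
          refine le_trans (le_totalDegree hd1) ?_
          refine le_trans (totalDegree_pow _ _) ?_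
          have : ((X i + C (s i) : Rp m)).totalDegree ≤ 1 := by
            refine le_trans (totalDegree_add _ _) ?_
            simp [totalDegree_X, totalDegree_C]
          calc b * (X i + C (s i) : Rp m).totalDegree ≤ b * 1 := Nat.mul_le_mul_left _ this
            _ = b := by omega
        have hb2 : d2.degree < α'.degree := IH d2 hd2
        rw [fdegree_add]
        omega
      · obtain ⟨d1, hd1, d2, hd2, rfl⟩ := Finset.mem_add.1 (support_mul _ _ h1)
        have hb1 : d1.degree < b := lt_of_le_of_lt (le_totalDegree hd1)
          (pow_sub_deg i (s i) b (Nat.one_le_iff_ne_zero.2 hb))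
        have hb2 : d2.degree ≤ α'.degree := by
          have : d2 ∈ (monomial α' (1:ℝ)).support := hd2
          rw [support_monomial] at this
          simp only [if_neg (one_ne_zero' ℝ)] at this
          rw [Finset.mem_singleton] at this
          subst this; exact le_rfl
        rw [fdegree_add]
        omega

/-- Support elements of `sh s P - P` have degree `< P.totalDegree`. -/
lemma sh_sub_support (s : Fin m → ℝ) (P : Rp m) :
    ∀ d ∈ (sh s P - P).support, d.degree < P.totalDegree := by
  classical
  intro d hd
  have hP : sh s P - P
      = ∑ α ∈ P.support, (coeff α P) • (sh s (monomial α 1) - monomial α 1) := by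
    conv_lhs => rw [as_sum P]
    rw [map_sum, ← Finset.sum_sub_distrib]
    apply Finset.sum_congr rfl
    intro α hα
    have : (monomial α (coeff α P) : Rp m) = (coeff α P) • monomial α 1 := by
      rw [smul_monomial, smul_eq_mul, mul_one]
    rw [this, map_smul, ← smul_sub]
  rw [hP] at hd
  obtain ⟨α, hα, hmem⟩ : ∃ α ∈ P.support,
      d ∈ ((coeff α P) • (sh s (monomial α (1:ℝ)) - monomial α 1)).support := by
    by_contra hcon
    push_neg at hcon
    have : coeff d (∑ α ∈ P.support, (coeff α P) • (sh s (monomial α (1:ℝ)) - monomial α 1)) = 0 := by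
      rw [coeff_sum]
      apply Finset.sum_eq_zero
      intro α hα
      exact notMem_support_iff.1 (hcon α hα)
    exact notMem_support_iff.2 this hd
  have hmem' : d ∈ (sh s (monomial α (1:ℝ)) - monomial α 1).support :=
    MvPolynomial.support_smul hmem
  exact lt_of_lt_of_le (sh_monomial_support s α d hmem') (le_totalDegree hα)

lemma totalDegree_sh_sub_le (s : Fin m → ℝ) (P : Rp m) :
    (sh s P - P).totalDegree ≤ P.totalDegree := by
  apply Finset.sup_le
  intro d hd
  exact le_of_lt (sh_sub_support s P d hd)

lemma totalDegree_sh_le (s : Fin m → ℝ) (P : Rp m) :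
    (sh s P).totalDegree ≤ P.totalDegree := by
  have : sh s P = P + (sh s P - P) := by ring
  rw [this]
  exact le_trans (totalDegree_add _ _) (max_le le_rfl (totalDegree_sh_sub_le s P))

lemma exists_degree_eq {Q : Rp m} (h : Q ≠ 0) : ∃ d ∈ Q.support, d.degree = Q.totalDegree := by
  obtain ⟨d, hd, hs⟩ := Finset.exists_mem_eq_sup Q.support
    (Finset.nonempty_iff_ne_empty.2 (mt support_eq_empty.1 h)) (fun d => d.sum fun _ e => e)
  refine ⟨d, hd, ?_⟩
  rw [MvPolynomial.totalDegree, hs]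
  rfl

/-- cast of an integer vector -/
def cz (s : Fin m → ℤ) : Fin m → ℝ := fun i => (s i : ℝ)

/-- The Laplacian on polynomials. -/
def TT (S : Multiset (Fin m → ℤ)) (P : Rp m) : Rp m :=
  (S.map fun s => sh (cz s) P - P).sum

lemma TT_add (S : Multiset (Fin m → ℤ)) (P Q : Rp m) :
    TT S (P + Q) = TT S P + TT S Q := by
  unfold TT
  rw [← Multiset.sum_map_add]
  congr 1
  apply Multiset.map_congr rfl
  intro s _
  rw [map_add]
  ring

lemma TT_smul (S : Multiset (Fin m → ℤ)) (c : ℝ) (P : Rp m) :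
    TT S (c • P) = c • TT S P := by
  unfold TT
  rw [Multiset.smul_sum, Multiset.map_map]
  congr 1
  apply Multiset.map_congr rfl
  intro s _
  rw [map_smul]
  simp [smul_sub]

lemma support_multiset_sum {M : Multiset (Rp m)} {d : Fin m →₀ ℕ} (hd : d ∈ M.sum.support) :
    ∃ p ∈ M, d ∈ p.support := by
  classical
  induction M using Multiset.induction with
  | empty => simp at hd
  | cons a M IH =>
      rw [Multiset.sum_cons] at hd
      rcases Finset.mem_union.1 (MvPolynomial.support_add hd) with h | h
      · exact ⟨a, Multiset.mem_cons_self a M, h⟩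
      · obtain ⟨p, hp, hp2⟩ := IH h
        exact ⟨p, Multiset.mem_cons_of_mem hp, hp2⟩

/-- Using symmetry, the Laplacian lowers degree by (at least) 2, support-wise. -/
lemma TT_support {S : Multiset (Fin m → ℤ)} (hsym : S.map (fun s => -s) = S) (P : Rp m) :
    ∀ d ∈ (TT S P).support, d.degree + 2 ≤ P.totalDegree := by
  classical
  intro d hd
  -- 2 • TT S P = sum over S of (f s + f (-s))
  have key : TT S P + TT S P
      = (S.map fun s => ((sh (cz s) P - P) + (sh (cz (-s)) P - P))).sum := by
    have e1 : (S.map fun s => ((sh (cz s) P - P) + (sh (cz (-s)) P - P))).sum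
        = (S.map fun s => (sh (cz s) P - P)).sum
          + (S.map fun s => (sh (cz (-s)) P - P)).sum := Multiset.sum_map_add
    have e2 : (S.map fun s => (sh (cz (-s)) P - P)) = (S.map fun s => (sh (cz s) P - P)) := by
      conv_rhs => rw [← hsym]
      rw [Multiset.map_map]
      rfl
    rw [e1, e2]
    rfl
  have hd2 : d ∈ (TT S P + TT S P).support := by
    rw [mem_support_iff, coeff_add]
    have := mem_support_iff.1 hd
    intro hcon
    apply this
    have : coeff d (TT S P) + coeff d (TT S P) = 2 * coeff d (TT S P) := by ring
    rw [this] at hcon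
    linarith [hcon]
  rw [key] at hd2
  obtain ⟨p, hp, hdp⟩ := support_multiset_sum hd2
  obtain ⟨s, hs, rfl⟩ := Multiset.mem_map.1 hp
  -- identify p as -(sh (cz s) Q - Q) with Q = sh (cz (-s)) P - P
  set Q : Rp m := sh (cz (-s)) P - P with hQ
  have hneg : cz s + cz (-s) = 0 := by
    funext i
    simp [cz]
  have hid : (sh (cz s) P - P) + (sh (cz (-s)) P - P) = -(sh (cz s) Q - Q) := by
    rw [hQ]
    rw [map_sub, sh_sh, hneg, sh_zero]
    ring
  rw [hid] at hdp
  rw [support_neg] at hdp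
  have h1 : d.degree < Q.totalDegree := sh_sub_support (cz s) Q d hdp
  have hQ0 : Q ≠ 0 := by
    intro h0
    rw [h0] at hdp
    simp at hdp
  obtain ⟨d', hd', hdeq⟩ := exists_degree_eq hQ0
  have h2 : d'.degree < P.totalDegree := sh_sub_support (cz (-s)) P d' hd'
  omega

lemma totalDegree_TT_le {S : Multiset (Fin m → ℤ)} (hsym : S.map (fun s => -s) = S) (P : Rp m) :
    (TT S P).totalDegree ≤ P.totalDegree - 2 := by
  apply Finset.sup_le
  intro d hd
  have h := TT_support hsym P d hd
  show (d.sum fun _ e => e) ≤ P.totalDegree - 2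
  have : (d.sum fun _ e => e) = d.degree := rfl
  omega

/-! ### The Fischer inner product -/

/-- weight `α! = ∏ (α i)!` -/
def w (α : Fin m →₀ ℕ) : ℝ := ∏ i, ((α i).factorial : ℝ)

lemma w_pos (α : Fin m →₀ ℕ) : 0 < w α := by
  apply Finset.prod_pos
  intro i _
  exact_mod_cast Nat.factorial_pos _

lemma w_add_single (α : Fin m →₀ ℕ) (i : Fin m) :
    w (α + Finsupp.single i 1) = w α * ((α i : ℝ) + 1) := by
  classical
  unfold w
  rw [← Finset.mul_prod_erase Finset.univ _ (Finset.mem_univ i),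
      ← Finset.mul_prod_erase Finset.univ (fun j => ((α j).factorial : ℝ)) (Finset.mem_univ i)]
  have h1 : ((α + Finsupp.single i 1 : Fin m →₀ ℕ) i).factorial = (α i).factorial * (α i + 1) := by
    simp [Nat.factorial_succ]
    ring
  have h2 : ∀ j ∈ Finset.univ.erase i,
      (((α + Finsupp.single i 1 : Fin m →₀ ℕ) j).factorial : ℝ) = ((α j).factorial : ℝ) := by
    intro j hj
    have : j ≠ i := (Finset.mem_erase.1 hj).1
    simp [Finsupp.single_apply, this.symm]
  rw [Finset.prod_congr rfl h2]
  have h3 : ((α + Finsupp.single i 1 : Fin m →₀ ℕ) i) = α i + 1 := by simp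
  rw [h3, Nat.factorial_succ]
  push_cast
  ring

/-- The Fischer bilinear form. -/
def B (P Q : Rp m) : ℝ := ∑ α ∈ Q.support, w α * coeff α P * coeff α Q

lemma B_eq_sum {Q : Rp m} (P : Rp m) {t : Finset (Fin m →₀ ℕ)} (h : Q.support ⊆ t) :
    B P Q = ∑ α ∈ t, w α * coeff α P * coeff α Q := by
  apply Finset.sum_subset h
  intro x _ hx
  rw [notMem_support_iff.1 hx]
  ring

lemma B_add_left (P P' Q : Rp m) : B (P + P') Q = B P Q + B P' Q := by
  unfold B
  rw [← Finset.sum_add_distrib]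
  apply Finset.sum_congr rfl
  intro α _
  rw [coeff_add]
  ring

lemma B_smul_left (c : ℝ) (P Q : Rp m) : B (c • P) Q = c * B P Q := by
  unfold B
  rw [Finset.mul_sum]
  apply Finset.sum_congr rfl
  intro α _
  rw [coeff_smul]
  simp
  ring

lemma B_zero_left (Q : Rp m) : B 0 Q = 0 := by
  unfold B
  apply Finset.sum_eq_zero
  intro α _
  simp

lemma B_sub_left (P P' Q : Rp m) : B (P - P') Q = B P Q - B P' Q := by
  unfold B
  rw [← Finset.sum_sub_distrib]
  apply Finset.sum_congr rfl
  intro α _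
  rw [coeff_sub]
  ring

lemma B_add_right (P Q Q' : Rp m) : B P (Q + Q') = B P Q + B P Q' := by
  classical
  have h1 : (Q + Q').support ⊆ Q.support ∪ Q'.support := MvPolynomial.support_add
  rw [B_eq_sum P h1, B_eq_sum P (Finset.subset_union_left (s₂ := Q'.support)),
      B_eq_sum P (Finset.subset_union_right (s₁ := Q.support)), ← Finset.sum_add_distrib]
  apply Finset.sum_congr rfl
  intro α _
  rw [coeff_add]
  ring

lemma B_smul_right (c : ℝ) (P Q : Rp m) : B P (c • Q) = c * B P Q := by
  classical
  have h1 : (c • Q).support ⊆ Q.support := MvPolynomial.support_smul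
  rw [B_eq_sum P h1]
  unfold B
  rw [Finset.mul_sum]
  apply Finset.sum_congr rfl
  intro α _
  rw [coeff_smul]
  simp
  ring

lemma B_zero_right (P : Rp m) : B P 0 = 0 := by
  unfold B
  simp

lemma B_sum_left {ι : Type*} (t : Finset ι) (f : ι → Rp m) (Q : Rp m) :
    B (∑ i ∈ t, f i) Q = ∑ i ∈ t, B (f i) Q := by
  classical
  induction t using Finset.induction with
  | empty => simp [B_zero_left]
  | insert _ _ hni IH =>
      rw [Finset.sum_insert hni, Finset.sum_insert hni, B_add_left, IH]

lemma B_msum_left (M : Multiset (Rp m)) (Q : Rp m) :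
    B M.sum Q = (M.map fun p => B p Q).sum := by
  induction M using Multiset.induction with
  | empty => simp [B_zero_left]
  | cons a M IH =>
      rw [Multiset.sum_cons, Multiset.map_cons, Multiset.sum_cons, B_add_left, IH]

lemma B_msum_right (P : Rp m) (M : Multiset (Rp m)) :
    B P M.sum = (M.map fun p => B P p).sum := by
  induction M using Multiset.induction with
  | empty => simp [B_zero_right]
  | cons a M IH =>
      rw [Multiset.sum_cons, Multiset.map_cons, Multiset.sum_cons, B_add_right, IH]

lemma B_self_pos {P : Rp m} (h : P ≠ 0) : 0 < B P P := by
  unfold B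
  apply Finset.sum_pos
  · intro α hα
    have hc : coeff α P ≠ 0 := mem_support_iff.1 hα
    have : w α * coeff α P * coeff α P = w α * (coeff α P)^2 := by ring
    rw [this]
    exact mul_pos (w_pos α)
      (lt_of_le_of_ne (sq_nonneg _) (Ne.symm fun h => hc ((pow_eq_zero_iff two_ne_zero).1 h)))
  · exact Finset.nonempty_iff_ne_empty.2 (mt support_eq_empty.1 h)

lemma B_monomial_right (P : Rp m) (β : Fin m →₀ ℕ) (b : ℝ) :
    B P (monomial β b) = w β * coeff β P * b := by
  classical
  rw [B_eq_sum P support_monomial_subset]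
  rw [Finset.sum_singleton, coeff_monomial, if_pos rfl]

lemma single_add_sub {β : Fin m →₀ ℕ} {i : Fin m} (h : β i ≠ 0) :
    Finsupp.single i 1 + (β - Finsupp.single i 1) = β := by
  apply add_tsub_cancel_of_le
  exact Finsupp.single_le_iff.2 (by omega)

/-- Multiplication by `X i` is `B`-adjoint to `∂ i`. -/
lemma B_X_mul (i : Fin m) (u v : Rp m) : B (X i * u) v = B u (pderiv i v) := by
  classical
  induction v using MvPolynomial.induction_on' with
  | add p q hp hq => rw [map_add, B_add_right, B_add_right, hp, hq]
  | monomial β b =>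
      rw [pderiv_monomial, B_monomial_right, B_monomial_right]
      by_cases hβ : β i = 0
      · have h0 : coeff β (X i * u) = 0 := by
          apply notMem_support_iff.1
          intro hmem
          rw [support_X_mul] at hmem
          obtain ⟨γ, _, hγ⟩ := Finset.mem_map.1 hmem
          have hγ' : Finsupp.single i 1 + γ = β := hγ
          have hβ2 : β i = 1 + γ i := by rw [← hγ']; simp
          omega
        rw [h0, hβ]
        push_cast
        ring
      · set γ := β - Finsupp.single i 1 with hγdef
        have hβγ : Finsupp.single i 1 + γ = β := single_add_sub hβ
        have hc : coeff β (X i * u) = coeff γ u := by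
          rw [← hβγ, coeff_X_mul]
        have hw : w β = w γ * ((γ i : ℝ) + 1) := by
          rw [← hβγ, add_comm (Finsupp.single i 1) γ, w_add_single]
        have hγi : (γ i : ℝ) + 1 = (β i : ℝ) := by
          have hn : γ i + 1 = β i := by
            rw [hγdef]
            simp only [Finsupp.tsub_apply, Finsupp.single_eq_same]
            omega
          exact_mod_cast congrArg (Nat.cast (R := ℝ)) hn
        rw [hc, hw, hγi]
        ring

lemma degree_eq_of_mem_support {Q : Rp m} {n : ℕ} (hQ : Q.IsHomogeneous n)
    {α : Fin m →₀ ℕ} (hα : α ∈ Q.support) : α.degree = n := by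
  have := hQ (mem_support_iff.1 hα)
  rw [Finsupp.degree_eq_weight_one]
  exact this

lemma B_eq_zero_of_ne {P Q : Rp m} {n : ℕ} (hQ : Q.IsHomogeneous n)
    (hP : ∀ α ∈ P.support, α.degree ≠ n) : B P Q = 0 := by
  unfold B
  apply Finset.sum_eq_zero
  intro α hα
  have hdeg : α.degree = n := degree_eq_of_mem_support hQ hα
  have hz : coeff α P = 0 := by
    by_contra hcon
    exact hP α (mem_support_iff.2 hcon) hdeg
  rw [hz]
  ring

lemma B_eq_zero_deg_lt {P Q : Rp m} {n : ℕ} (hQ : Q.IsHomogeneous n)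
    (hP : P.totalDegree < n) : B P Q = 0 := by
  apply B_eq_zero_of_ne hQ
  intro α hα
  have := degree_le_totalDegree hα
  omega

lemma B_eq_zero_homog {P Q : Rp m} {k n : ℕ} (hP : P.IsHomogeneous k) (hQ : Q.IsHomogeneous n)
    (hkn : k ≠ n) : B P Q = 0 := by
  apply B_eq_zero_of_ne hQ
  intro α hα
  rw [degree_eq_of_mem_support hP hα]
  exact hkn

lemma B_homogeneousComponent {P Q : Rp m} {n : ℕ} (hQ : Q.IsHomogeneous n) :
    B (homogeneousComponent n P) Q = B P Q := by
  unfold B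
  apply Finset.sum_congr rfl
  intro α hα
  rw [coeff_homogeneousComponent, if_pos]
  exact degree_eq_of_mem_support hQ hα

lemma isHomogeneous_pderiv {P : Rp m} {n : ℕ} (h : P.IsHomogeneous n) (i : Fin m) :
    (pderiv i P).IsHomogeneous (n - 1) := by
  classical
  conv_lhs => rw [as_sum P]
  rw [map_sum]
  apply IsHomogeneous.sum
  intro α hα
  rw [pderiv_monomial]
  by_cases hαi : α i = 0
  · rw [hαi]
    push_cast
    rw [mul_zero, monomial_zero]
    exact isHomogeneous_zero _ _ _
  · apply isHomogeneous_monomial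
    have h1 : Finsupp.single i 1 + (α - Finsupp.single i 1) = α := single_add_sub hαi
    have h2 : α.degree = n := degree_eq_of_mem_support h hα
    have h3 := fdegree_add (Finsupp.single i 1) (α - Finsupp.single i 1)
    rw [h1, fdegree_single] at h3
    omega

lemma sum_cast_degree (α : Fin m →₀ ℕ) : ∑ i, (α i : ℝ) = (α.degree : ℝ) := by
  rw [Finsupp.degree_apply]
  push_cast
  exact (Finset.sum_subset (Finset.subset_univ α.support)
    (by intro x _ hx; rw [Finsupp.notMem_support_iff.1 hx]; norm_num)).symm

/-- Euler's identity for homogeneous polynomials. -/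
lemma euler {P : Rp m} {n : ℕ} (h : P.IsHomogeneous n) :
    ∑ i, X i * pderiv i P = (n : ℝ) • P := by
  classical
  have key : ∀ α ∈ P.support,
      ∑ i, X i * pderiv i (monomial α (coeff α P)) = (n : ℝ) • monomial α (coeff α P) := by
    intro α hα
    have hd : α.degree = n := degree_eq_of_mem_support h hα
    have step1 : ∀ i : Fin m,
        X i * pderiv i (monomial α (coeff α P)) = monomial α (coeff α P * (α i : ℝ)) := by
      intro i
      rw [pderiv_monomial]
      by_cases hαi : α i = 0
      · rw [hαi]
        push_cast
        rw [mul_zero, monomial_zero, mul_zero, monomial_zero]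
      · have hX : (X i : Rp m) = monomial (Finsupp.single i 1) 1 := by
          rw [← X_pow_eq_monomial, pow_one]
        rw [hX, monomial_mul, one_mul, single_add_sub hαi]
    calc ∑ i, X i * pderiv i (monomial α (coeff α P))
        = ∑ i, monomial α (coeff α P * (α i : ℝ)) := Finset.sum_congr rfl fun i _ => step1 i
      _ = monomial α (∑ i, coeff α P * (α i : ℝ)) := (map_sum (monomial α) _ _).symm
      _ = monomial α (coeff α P * (n : ℝ)) := by
          rw [← Finset.mul_sum, sum_cast_degree, hd]
      _ = (n : ℝ) • monomial α (coeff α P) := by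
          rw [smul_monomial, smul_eq_mul, mul_comm]
  calc ∑ i, X i * pderiv i P
      = ∑ i, ∑ α ∈ P.support, X i * pderiv i (monomial α (coeff α P)) := by
        apply Finset.sum_congr rfl
        intro i _
        conv_lhs => rw [as_sum P]
        rw [map_sum, Finset.mul_sum]
    _ = ∑ α ∈ P.support, ∑ i, X i * pderiv i (monomial α (coeff α P)) := Finset.sum_comm
    _ = ∑ α ∈ P.support, (n : ℝ) • monomial α (coeff α P) := Finset.sum_congr rfl key
    _ = (n : ℝ) • P := by
        rw [← Finset.smul_sum, ← as_sum P]

/-- The linear form `∑ s i * X i`. -/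
def lin (s : Fin m → ℝ) : Rp m := ∑ i, C (s i) * X i

lemma lin_isHomogeneous (s : Fin m → ℝ) : (lin s).IsHomogeneous 1 :=
  IsHomogeneous.sum _ _ _ (fun i _ => isHomogeneous_C_mul_X _ _)

lemma linsq_isHomogeneous (s : Fin m → ℝ) : ((lin s) ^ 2).IsHomogeneous 2 := by
  have := (lin_isHomogeneous s).pow 2
  simpa using this

lemma pderiv_lin (s : Fin m → ℝ) (i : Fin m) : pderiv i (lin s) = C (s i) := by
  classical
  unfold lin
  rw [map_sum]
  rw [Finset.sum_eq_single i]
  · rw [pderiv_C_mul, pderiv_X_self, mul_one]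
  · intro j _ hj
    rw [pderiv_C_mul, pderiv_X_of_ne hj, mul_zero]
  · intro hi
    exact absurd (Finset.mem_univ i) hi

lemma pderiv_linsq (s : Fin m → ℝ) (i : Fin m) :
    pderiv i ((lin s) ^ 2) = C (2 * s i) * lin s := by
  rw [sq, pderiv_mul, pderiv_lin]
  have h2 : (C (2 * s i) : Rp m) = C (s i) + C (s i) := by
    rw [← map_add]
    congr 1
    ring
  rw [h2]
  ring

/-- `sh` commutes with `pderiv`. -/
lemma sh_pderiv (s : Fin m → ℝ) (i : Fin m) (P : Rp m) :
    pderiv i (sh s P) = sh s (pderiv i P) := by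
  classical
  induction P using MvPolynomial.induction_on with
  | C c => rw [sh_C, pderiv_C, map_zero]
  | add p q hp hq => rw [map_add, map_add, map_add, hp, hq, map_add]
  | mul_X p j hp =>
      by_cases hij : j = i
      · subst hij
        simp [map_mul, sh_X, pderiv_mul, hp, pderiv_X_self]
      · simp [map_mul, sh_X, pderiv_mul, hp, pderiv_X_of_ne hij]

/-- Core expansion: for `P` homogeneous of degree `n+1`,
`(n+1) B (sh s P) Q = ∑ i (B (sh s ∂ᵢP) ∂ᵢQ + s i * B (sh s ∂ᵢP) Q)`. -/
lemma core {s : Fin m → ℝ} {P : Rp m} {n : ℕ} (hP : P.IsHomogeneous (n + 1)) (Q : Rp m) :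
    ((n : ℝ) + 1) * B (sh s P) Q
      = ∑ i, (B (sh s (pderiv i P)) (pderiv i Q) + s i * B (sh s (pderiv i P)) Q) := by
  have he := euler hP
  have h1 : ((n : ℝ) + 1) * B (sh s P) Q = B (sh s (((n : ℝ) + 1) • P)) Q := by
    rw [map_smul, ← B_smul_left]
  rw [h1]
  have h2 : (((n : ℝ) + 1) • P) = ∑ i, X i * pderiv i P := by
    rw [he]
    norm_num
  rw [h2, map_sum, B_sum_left]
  apply Finset.sum_congr rfl
  intro i _
  rw [map_mul, sh_X, add_mul, B_add_left, B_X_mul]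
  congr 1
  rw [C_mul', B_smul_left]

/-- Core expansion without shift. -/
lemma core' {P : Rp m} {n : ℕ} (hP : P.IsHomogeneous (n + 1)) (Q : Rp m) :
    ((n : ℝ) + 1) * B P Q = ∑ i, B (pderiv i P) (pderiv i Q) := by
  have he := euler hP
  have h1 : ((n : ℝ) + 1) * B P Q = B (((n : ℝ) + 1) • P) Q := by
    rw [← B_smul_left]
  have h2 : (((n : ℝ) + 1) • P) = ∑ i, X i * pderiv i P := by
    rw [he]; norm_num
  rw [h1, h2, B_sum_left]
  apply Finset.sum_congr rfl
  intro i _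
  rw [B_X_mul]

lemma eq_C_of_homog0 {P : Rp m} (h : P.IsHomogeneous 0) : ∃ c, P = C c := by
  classical
  have h0 : P.totalDegree = 0 := Nat.le_zero.1 h.totalDegree_le
  refine ⟨coeff 0 P, ?_⟩
  ext d
  rw [coeff_C]
  by_cases hd : d = 0
  · subst hd
    simp
  · rw [if_neg fun hc => hd hc.symm]
    by_contra hc
    apply hd
    have hmem : d ∈ P.support := mem_support_iff.2 hc
    have hall := (totalDegree_eq_zero_iff (p := P)).1 h0 d hmem
    ext x
    exact hall x

lemma isHomogeneous_pderiv' {P : Rp m} {n : ℕ} (h : P.IsHomogeneous (n + 1)) (i : Fin m) :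
    (pderiv i P).IsHomogeneous n := by
  have := isHomogeneous_pderiv h i
  simpa using this

/-- Degree-preserving adjoint identity: `B (sh s P) Q = B P Q` for same-degree homogeneous. -/
lemma adj0 (s : Fin m → ℝ) : ∀ n : ℕ, ∀ P Q : Rp m,
    P.IsHomogeneous n → Q.IsHomogeneous n → B (sh s P) Q = B P Q := by
  intro n
  induction n with
  | zero =>
      intro P Q hP hQ
      obtain ⟨c, rfl⟩ := eq_C_of_homog0 hP
      rw [sh_C]
  | succ n IH =>
      intro P Q hP hQ
      have hcancel : ((n : ℝ) + 1) ≠ 0 := by positivity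
      apply mul_left_cancel₀ hcancel
      rw [core hP Q, core' hP Q]
      apply Finset.sum_congr rfl
      intro i _
      have hzero : B (sh s (pderiv i P)) Q = 0 := by
        apply B_eq_zero_of_ne hQ
        intro α hα
        have h1 := degree_le_totalDegree hα
        have h2 := totalDegree_sh_le s (pderiv i P)
        have h3 : (pderiv i P).totalDegree ≤ n := (isHomogeneous_pderiv' hP i).totalDegree_le
        omega
      rw [hzero, mul_zero, add_zero]
      exact IH _ _ (isHomogeneous_pderiv' hP i) (isHomogeneous_pderiv' hQ i)

lemma adj1_aux (s : Fin m → ℝ) {n : ℕ} {P Q : Rp m}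
    (hP : P.IsHomogeneous (n + 1)) (hQ : Q.IsHomogeneous n)
    (hfirst : ∀ i, B (sh s (pderiv i P)) (pderiv i Q) = B (pderiv i P) (lin s * pderiv i Q)) :
    B (sh s P) Q = B P (lin s * Q) := by
  have hcancel : ((n : ℝ) + 1) ≠ 0 := by positivity
  apply mul_left_cancel₀ hcancel
  rw [core hP Q, core' hP (lin s * Q)]
  apply Finset.sum_congr rfl
  intro i _
  have hd : pderiv i (lin s * Q) = C (s i) * Q + lin s * pderiv i Q := by
    rw [pderiv_mul, pderiv_lin]
  rw [hd, B_add_right, hfirst i, C_mul', B_smul_right]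
  have h0 : B (sh s (pderiv i P)) Q = B (pderiv i P) Q :=
    adj0 s n _ _ (isHomogeneous_pderiv' hP i) hQ
  rw [h0]
  ring

/-- Degree-one-shift adjoint identity. -/
lemma adj1 (s : Fin m → ℝ) : ∀ n : ℕ, ∀ P Q : Rp m,
    P.IsHomogeneous (n + 1) → Q.IsHomogeneous n → B (sh s P) Q = B P (lin s * Q) := by
  intro n
  induction n with
  | zero =>
      intro P Q hP hQ
      apply adj1_aux s hP hQ
      intro i
      have hQ0 : pderiv i Q = 0 := by
        obtain ⟨c, rfl⟩ := eq_C_of_homog0 hQ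
        exact pderiv_C
      rw [hQ0, B_zero_right, mul_zero, B_zero_right]
  | succ n IH =>
      intro P Q hP hQ
      apply adj1_aux s hP hQ
      intro i
      exact IH _ _ (isHomogeneous_pderiv' hP i) (isHomogeneous_pderiv' hQ i)

lemma adj2_aux (s : Fin m → ℝ) {n : ℕ} {P Q : Rp m}
    (hP : P.IsHomogeneous (n + 1 + 1)) (hQ : Q.IsHomogeneous n)
    (hfirst : ∀ i, 2 * B (sh s (pderiv i P)) (pderiv i Q)
      = B (pderiv i P) (lin s ^ 2 * pderiv i Q)) :
    2 * B (sh s P) Q = B P (lin s ^ 2 * Q) := by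
  have hcancel : ((n : ℝ) + 1 + 1) ≠ 0 := by positivity
  have hc := core (s := s) (n := n + 1) hP Q
  have hc' := core' (n := n + 1) hP (lin s ^ 2 * Q)
  push_cast at hc hc'
  apply mul_left_cancel₀ hcancel
  calc ((n : ℝ) + 1 + 1) * (2 * B (sh s P) Q)
      = 2 * (((n : ℝ) + 1 + 1) * B (sh s P) Q) := by ring
    _ = 2 * ∑ i, (B (sh s (pderiv i P)) (pderiv i Q) + s i * B (sh s (pderiv i P)) Q) := by
        rw [hc]
    _ = ∑ i, (2 * B (sh s (pderiv i P)) (pderiv i Q) + 2 * s i * B (sh s (pderiv i P)) Q) := by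
        rw [Finset.mul_sum]
        apply Finset.sum_congr rfl
        intro i _
        ring
    _ = ∑ i, B (pderiv i P) (pderiv i (lin s ^ 2 * Q)) := by
        apply Finset.sum_congr rfl
        intro i _
        have hsh : B (sh s (pderiv i P)) Q = B (pderiv i P) (lin s * Q) :=
          adj1 s n _ _ (isHomogeneous_pderiv' hP i) hQ
        have hd : pderiv i (lin s ^ 2 * Q) = C (2 * s i) * (lin s * Q) + lin s ^ 2 * pderiv i Q := by
          rw [pderiv_mul, pderiv_linsq]
          ring
        rw [hd, B_add_right, C_mul', B_smul_right, hfirst i, hsh]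
        ring
    _ = ((n : ℝ) + 1 + 1) * B P (lin s ^ 2 * Q) := hc'.symm

/-- Degree-two-shift adjoint identity. -/
lemma adj2 (s : Fin m → ℝ) : ∀ n : ℕ, ∀ P Q : Rp m,
    P.IsHomogeneous (n + 1 + 1) → Q.IsHomogeneous n →
    2 * B (sh s P) Q = B P (lin s ^ 2 * Q) := by
  intro n
  induction n with
  | zero =>
      intro P Q hP hQ
      apply adj2_aux s hP hQ
      intro i
      have hQ0 : pderiv i Q = 0 := by
        obtain ⟨c, rfl⟩ := eq_C_of_homog0 hQ
        exact pderiv_C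
      simp [hQ0, B_zero_right]
  | succ n IH =>
      intro P Q hP hQ
      apply adj2_aux s hP hQ
      intro i
      exact IH _ _ (isHomogeneous_pderiv' hP i) (isHomogeneous_pderiv' hQ i)

/-- The quadratic form `q = ∑_{s ∈ S} (s·X)²`. -/
def qS (S : Multiset (Fin m → ℤ)) : Rp m := (S.map fun s => lin (cz s) ^ 2).sum

lemma qS_isHomogeneous (S : Multiset (Fin m → ℤ)) : (qS S).IsHomogeneous 2 := by
  unfold qS
  induction S using Multiset.induction with
  | empty =>
      simp only [Multiset.map_zero, Multiset.sum_zero]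
      exact isHomogeneous_zero _ _ _
  | cons a S IH =>
      rw [Multiset.map_cons, Multiset.sum_cons]
      exact (linsq_isHomogeneous _).add IH

lemma eval_lin (v u : Fin m → ℝ) : eval v (lin u) = ∑ i, u i * v i := by
  unfold lin
  rw [map_sum]
  apply Finset.sum_congr rfl
  intro i _
  simp

lemma qS_ne_zero {S : Multiset (Fin m → ℤ)} (hs0 : ∃ s ∈ S, s ≠ 0) : qS S ≠ 0 := by
  obtain ⟨s₀, hmem, hs₀⟩ := hs0
  set v : Fin m → ℝ := cz s₀ with hv
  have hpos : 0 < eval v (qS S) := by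
    have hq : eval v (qS S) = ((S.map fun s => lin (cz s) ^ 2).map (eval v)).sum := by
      unfold qS
      exact map_multiset_sum (eval v) _
    rw [Multiset.map_map] at hq
    have hA : 0 < eval v (lin (cz s₀) ^ 2) := by
      rw [map_pow, eval_lin]
      have hA0 : 0 < ∑ i, cz s₀ i * v i := by
        apply Finset.sum_pos'
        · intro i _
          rw [hv]
          exact mul_self_nonneg _
        · obtain ⟨j, hj⟩ : ∃ j, s₀ j ≠ 0 := by
            by_contra hcon
            push_neg at hcon
            exact hs₀ (funext hcon)
          refine ⟨j, Finset.mem_univ j, ?_⟩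
          rw [hv]
          have hne : (cz s₀ j : ℝ) ≠ 0 := Int.cast_ne_zero.2 hj
          exact mul_self_pos.2 hne
      exact pow_pos hA0 2
    rw [hq]
    have hsplit : S = s₀ ::ₘ S.erase s₀ := (Multiset.cons_erase hmem).symm
    rw [hsplit, Multiset.map_cons, Multiset.sum_cons]
    have hrest : 0 ≤ ((S.erase s₀).map ((eval v) ∘ fun s => lin (cz s) ^ 2)).sum := by
      apply Multiset.sum_nonneg
      intro x hx
      obtain ⟨s, _, rfl⟩ := Multiset.mem_map.1 hx
      simp only [Function.comp_apply, map_pow]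
      positivity
    have hA' : 0 < ((eval v) ∘ fun s => lin (cz s) ^ 2) s₀ := hA
    linarith
  intro h0
  rw [h0, map_zero] at hpos
  exact lt_irrefl _ hpos

/-- Adjoint identity for the Laplacian. -/
lemma B_TT {S : Multiset (Fin m → ℤ)} {n : ℕ} {P Q : Rp m}
    (hP : P.IsHomogeneous (n + 1 + 1)) (hQ : Q.IsHomogeneous n) :
    2 * B (TT S P) Q = B P (qS S * Q) := by
  have hL : 2 * B (TT S P) Q = (S.map fun s => 2 * B (sh (cz s) P - P) Q).sum := by
    unfold TT
    rw [B_msum_left, Multiset.map_map, ← Multiset.sum_map_mul_left]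
    rfl
  have hR : B P (qS S * Q) = (S.map fun s => B P (lin (cz s) ^ 2 * Q)).sum := by
    unfold qS
    rw [← Multiset.sum_map_mul_right, B_msum_right, Multiset.map_map]
    rfl
  rw [hL, hR]
  congr 1
  apply Multiset.map_congr rfl
  intro s _
  have h1 : B (sh (cz s) P - P) Q = B (sh (cz s) P) Q := by
    rw [B_sub_left, B_eq_zero_homog hP hQ (by omega), sub_zero]
  rw [h1]
  exact adj2 (cz s) n P Q hP hQ

/-- Surjectivity of the top-degree part of the Laplacian on homogeneous polynomials. -/
lemma psi_surj (S : Multiset (Fin m → ℤ)) (hs0 : ∃ s ∈ S, s ≠ 0) (n : ℕ)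
    (G : Rp m) (hG : G.IsHomogeneous n) :
    ∃ h : Rp m, h.IsHomogeneous n ∧ homogeneousComponent n (TT S (qS S * h)) = G := by
  haveI hfd : FiniteDimensional ℝ (homogeneousSubmodule (Fin m) ℝ n) :=
    Submodule.finiteDimensional_of_le (S₂ := restrictTotalDegree (Fin m) ℝ n)
      (fun p hp => (mem_restrictTotalDegree _ _ _).2
        ((mem_homogeneousSubmodule _ _).1 hp).totalDegree_le)
  let Ψ : homogeneousSubmodule (Fin m) ℝ n →ₗ[ℝ] homogeneousSubmodule (Fin m) ℝ n :=
    { toFun := fun h => ⟨homogeneousComponent n (TT S (qS S * h)),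
        homogeneousComponent_mem _ _⟩
      map_add' := fun a b => by
        apply Subtype.ext
        simp only [Submodule.coe_add]
        rw [mul_add, TT_add, map_add]
      map_smul' := fun c a => by
        apply Subtype.ext
        simp only [SetLike.val_smul, RingHom.id_apply]
        rw [mul_smul_comm, TT_smul, map_smul] }
  have hinj : Function.Injective Ψ := by
    rw [injective_iff_map_eq_zero]
    intro a ha0
    have haH : (a : Rp m).IsHomogeneous n := (mem_homogeneousSubmodule _ _).1 a.2
    by_contra hne
    have hane : (a : Rp m) ≠ 0 := by
      intro h0
      exact hne (Subtype.ext h0)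
    have hqa : qS S * (a : Rp m) ≠ 0 := mul_ne_zero (qS_ne_zero hs0) hane
    have hval : homogeneousComponent n (TT S (qS S * (a : Rp m))) = 0 :=
      congrArg Subtype.val ha0
    have hP : (qS S * (a : Rp m)).IsHomogeneous (n + 1 + 1) := by
      have := (qS_isHomogeneous S).mul haH
      have h22 : 2 + n = n + 1 + 1 := by omega
      rwa [h22] at this
    have hzero : (0 : ℝ) = B (qS S * (a : Rp m)) (qS S * (a : Rp m)) := by
      calc (0:ℝ) = 2 * B (homogeneousComponent n (TT S (qS S * (a : Rp m)))) (a : Rp m) := by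
            rw [hval, B_zero_left, mul_zero]
        _ = 2 * B (TT S (qS S * (a : Rp m))) (a : Rp m) := by
            rw [B_homogeneousComponent haH]
        _ = B (qS S * (a : Rp m)) (qS S * (a : Rp m)) := B_TT hP haH
    exact absurd hzero.symm (ne_of_gt (B_self_pos hqa))
  have hsurj : Function.Surjective Ψ := LinearMap.injective_iff_surjective.1 hinj
  obtain ⟨h, hh⟩ := hsurj ⟨G, (mem_homogeneousSubmodule _ _).2 hG⟩
  refine ⟨(h : Rp m), (mem_homogeneousSubmodule _ _).1 h.2, ?_⟩
  exact congrArg Subtype.val hh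

/-- Main solvability: the Laplacian is surjective `P^{n+2} → P^n`. -/
lemma main_solv (S : Multiset (Fin m → ℤ)) (hsym : S.map (fun s => -s) = S)
    (hs0 : ∃ s ∈ S, s ≠ 0) : ∀ n : ℕ, ∀ g : Rp m, g.totalDegree ≤ n →
    ∃ f : Rp m, f.totalDegree ≤ n + 2 ∧ TT S f = g := by
  intro n
  induction n using Nat.strong_induction_on with
  | _ n IH =>
    intro g hg
    obtain ⟨h, hh, hcomp⟩ := psi_surj S hs0 n (homogeneousComponent n g)
      (homogeneousComponent_isHomogeneous n g)
    set f₁ : Rp m := qS S * h with hf₁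
    have hf₁homog : f₁.IsHomogeneous (n + 2) := by
      have := (qS_isHomogeneous S).mul hh
      have h22 : 2 + n = n + 2 := by omega
      rwa [h22] at this
    have hf₁deg : f₁.totalDegree ≤ n + 2 := hf₁homog.totalDegree_le
    set g' : Rp m := g - TT S f₁ with hg'def
    have hTdeg : (TT S f₁).totalDegree ≤ n := by
      have := totalDegree_TT_le hsym f₁
      omega
    have hg'deg : g'.totalDegree ≤ n := by
      rw [hg'def, sub_eq_add_neg]
      refine le_trans (totalDegree_add _ _) (max_le hg ?_)
      rw [totalDegree_neg]
      exact hTdeg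
    have hcomp0 : homogeneousComponent n g' = 0 := by
      rw [hg'def, map_sub, hcomp, sub_self]
    have hlt : ∀ d ∈ g'.support, d.degree + 1 ≤ n := by
      intro d hd
      have h1 : d.degree ≤ n := le_trans (degree_le_totalDegree hd) hg'deg
      rcases eq_or_ne d.degree n with he | hne
      · exfalso
        have hc : coeff d (homogeneousComponent n g') = coeff d g' := by
          rw [coeff_homogeneousComponent, if_pos he]
        rw [hcomp0] at hc
        simp only [coeff_zero] at hc
        exact mem_support_iff.1 hd hc.symm
      · omega
    match n, IH, hg, hTdeg, hg'deg, hlt with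
    | 0, _, hg, hTdeg, hg'deg, hlt =>
      have hg'0 : g' = 0 := by
        rw [← support_eq_empty]
        by_contra hne
        obtain ⟨d, hd⟩ := Finset.nonempty_of_ne_empty hne
        have := hlt d hd
        omega
      refine ⟨f₁, hf₁deg, ?_⟩
      have : g - TT S f₁ = 0 := hg'0
      linear_combination (norm := ring_nf) -this
    | (n' + 1), IH, hg, hTdeg, hg'deg, hlt =>
      have hg'deg' : g'.totalDegree ≤ n' := by
        apply Finset.sup_le
        intro d hd
        have h2 := hlt d hd
        have h3 : (d.sum fun _ e => e) = d.degree := rfl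
        omega
      obtain ⟨f₂, hf₂deg, hf₂⟩ := IH n' (by omega) g' hg'deg'
      refine ⟨f₁ + f₂, ?_, ?_⟩
      · refine le_trans (totalDegree_add _ _) (max_le hf₁deg ?_)
        omega
      · rw [TT_add, hf₂, hg'def]
        ring

/-- Evaluation of a shifted polynomial. -/
lemma eval_sh (v c : Fin m → ℝ) (P : Rp m) :
    eval v (sh c P) = eval (fun i => v i + c i) P := by
  induction P using MvPolynomial.induction_on with
  | C a => rw [sh_C]; simp
  | add p q hp hq => rw [map_add, map_add, hp, hq, map_add]
  | mul_X p j hp => rw [map_mul, map_mul, sh_X, hp]; simp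

/-- The discrete Laplacian agrees with `TT` on polynomial functions. -/
lemma lap_eq_TT (S : Multiset (Fin m → ℤ)) (P : Rp m) (f : (Fin m → ℤ) → ℝ)
    (hf : ∀ x, f x = eval (fun i => (x i : ℝ)) P) :
    lap S f = fun x => eval (fun i => (x i : ℝ)) (TT S P) := by
  funext x
  show (S.map fun s => f (x + s) - f x).sum = _
  unfold TT
  rw [map_multiset_sum (eval fun i => (x i : ℝ)), Multiset.map_map]
  congr 1
  apply Multiset.map_congr rfl
  intro s _
  simp only [Function.comp_apply]
  rw [map_sub, eval_sh, hf, hf]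
  congr 1
  apply congrArg (fun v => eval v P)
  funext i
  show ((x + s) i : ℝ) = (x i : ℝ) + cz s i
  unfold cz
  push_cast
  simp

end

end LapSurj

/-- **Surjectivity of the discrete Laplacian on polynomials** (Corollary 5.4). For any finite
symmetric generating set `S` of `ℤ^m` and `k ≥ 2`, the linear map
`L^S : P^k(ℤ^m) → P^{k-2}(ℤ^m)` is well defined and surjective. -/
theorem lap_surjective_on_polynomials (m : ℕ) (hm : 1 ≤ m) (S : Multiset (Fin m → ℤ))
    (hsym : S.map (fun s => -s) = S)
    (hgen : AddSubgroup.closure {s : Fin m → ℤ | s ∈ S} = ⊤)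
    (k : ℕ) (hk : 2 ≤ k) :
    (∀ f ∈ PolySet m k, lap S f ∈ PolySet m (k - 2)) ∧
    ∀ g ∈ PolySet m (k - 2), ∃ f ∈ PolySet m k, lap S f = g := by
  constructor
  · intro f hf
    obtain ⟨P, hPdeg, hPval⟩ := hf
    refine ⟨LapSurj.TT S P, ?_, ?_⟩
    · have := LapSurj.totalDegree_TT_le hsym P
      omega
    · intro x
      exact congrFun (LapSurj.lap_eq_TT S P f hPval) x
  · intro g hg
    obtain ⟨G, hGdeg, hGval⟩ := hg
    have hs0 : ∃ s ∈ S, s ≠ 0 := by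
      by_contra hcon
      push_neg at hcon
      have hsub : {s : Fin m → ℤ | s ∈ S} ⊆ {(0 : Fin m → ℤ)} := fun s hs => hcon s hs
      have hle : AddSubgroup.closure {s : Fin m → ℤ | s ∈ S}
          ≤ AddSubgroup.closure {(0 : Fin m → ℤ)} := AddSubgroup.closure_mono hsub
      rw [AddSubgroup.closure_singleton_zero, hgen] at hle
      have h1 : (fun _ => (1:ℤ) : Fin m → ℤ) ∈ (⊥ : AddSubgroup (Fin m → ℤ)) :=
        hle (AddSubgroup.mem_top _)
      rw [AddSubgroup.mem_bot] at h1
      have h2 := congrFun h1 ⟨0, hm⟩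
      simp at h2
    obtain ⟨F, hFdeg, hFT⟩ := LapSurj.main_solv S hsym hs0 (k - 2) G hGdeg
    have hFdeg' : F.totalDegree ≤ k := by omega
    refine ⟨fun x => MvPolynomial.eval (fun i => (x i : ℝ)) F, ⟨F, hFdeg', fun x => rfl⟩, ?_⟩
    rw [LapSurj.lap_eq_TT S F _ (fun x => rfl), hFT]
    funext x
    exact (hGval x).symm
end
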